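/- arXiv:1612.06288 — 10 statements merged into one kernel-verified Lean document; each statement's English description precedes it below -/
import Mathlib

section
/- If C is a closed subset of the nonnegative orthant in R^n, then the Minkowski sum of the convex hull of C and the nonnegative orthant, conv(C) + R^n_+, is a closed set. -/
open Pointwise

open Filter Topology

section
variable {n : ℕ}
local notation "E" => EuclideanSpace ℝ (Fin n)

lemma orthant_closed : IsClosed {x : E | ∀ i, 0 ≤ x i} := by
  have : {x : E | ∀ i, 0 ≤ x i} = ⋂ i, (fun x : E => x i) ⁻¹' Set.Ici 0 := by
    ext x; simp [Set.mem_iInter]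
  rw [this]
  exact isClosed_iInter fun i =>
    IsClosed.preimage (EuclideanSpace.proj (𝕜 := ℝ) i).continuous isClosed_Ici

lemma orthant_convex : Convex ℝ {x : E | ∀ i, 0 ≤ x i} := by
  intro x hx y hy a b ha hb _
  intro i
  have : (a • x + b • y : E) i = a * x i + b * y i := rfl
  rw [this]
  exact add_nonneg (mul_nonneg ha (hx i)) (mul_nonneg hb (hy i))

lemma euclid_sum_apply {ι : Type*} (s : Finset ι) (f : ι → E) (j : Fin n) :
    (∑ i ∈ s, f i) j = ∑ i ∈ s, f i j := by
  exact map_sum (EuclideanSpace.proj (𝕜 := ℝ) j) f s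

lemma norm_le_of_coord_le {a b : E} (ha : ∀ i, 0 ≤ a i) (hab : ∀ i, a i ≤ b i) : ‖a‖ ≤ ‖b‖ := by
  rw [EuclideanSpace.norm_eq, EuclideanSpace.norm_eq]
  apply Real.sqrt_le_sqrt
  apply Finset.sum_le_sum
  intro i _
  have := sq_le_sq' (by nlinarith [ha i, hab i]) (hab i)
  simpa [sq_abs] using this
end



/-- Fixed-size Carathéodory: in an `n`-dimensional space, points of a convex hull
are combinations of `n+1` points. -/
lemma carath_fin {n : ℕ} {s : Set (EuclideanSpace ℝ (Fin n))} {x : EuclideanSpace ℝ (Fin n)}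
    (hx : x ∈ convexHull ℝ s) :
    ∃ (t : Fin (n+1) → ℝ) (c : Fin (n+1) → EuclideanSpace ℝ (Fin n)),
      (∀ i, 0 ≤ t i) ∧ (∑ i, t i = 1) ∧ (∀ i, c i ∈ s) ∧ ∑ i, t i • c i = x := by
  obtain ⟨ι, hι, z, w, hzs, hai, hw0, hw1, hwz⟩ := eq_pos_convex_span_of_mem_convexHull hx
  have hm : Fintype.card ι ≤ n + 1 := by
    have h1 := hai.card_le_finrank_succ
    have h2 : Module.finrank ℝ ↥(vectorSpan ℝ (Set.range z)) ≤ n := by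
      simpa [finrank_euclideanSpace_fin] using Submodule.finrank_le (vectorSpan ℝ (Set.range z))
    omega
  set m := Fintype.card ι with hmdef
  have hne : Nonempty ι := by
    by_contra h
    rw [not_nonempty_iff] at h
    simp [Finset.univ_eq_empty] at hw1
  obtain ⟨i₀⟩ := hne
  let e : ι ≃ Fin m := Fintype.equivFin ι
  classical
  refine ⟨fun i => if h : (i : ℕ) < m then w (e.symm ⟨i, h⟩) else 0,
          fun i => if h : (i : ℕ) < m then z (e.symm ⟨i, h⟩) else z i₀, ?_, ?_, ?_, ?_⟩
  · intro i; dsimp only; split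
    · exact (hw0 _).le
    · rfl
  · have key : ∀ (f : ι → ℝ), (∑ i : Fin (n+1), if h : (i : ℕ) < m then f (e.symm ⟨i, h⟩) else 0)
        = ∑ j, f j := by
      intro f
      rw [← Finset.sum_subset (Finset.subset_univ ((Finset.univ : Finset (Fin m)).map
          (Fin.castLEEmb hm)))]
      · rw [Finset.sum_map]
        simp only [Fin.castLEEmb_apply]
        rw [show (∑ j : Fin m, if h : ((Fin.castLE hm j : Fin (n+1)) : ℕ) < m then
            f (e.symm ⟨_, h⟩) else 0) = ∑ j : Fin m, f (e.symm j) by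
          apply Finset.sum_congr rfl; intro j _
          rw [dif_pos (show ((Fin.castLE hm j : Fin (n+1)) : ℕ) < m from j.isLt)]; rfl]
        exact Equiv.sum_comp e.symm f
      · intro i _ hi
        rw [dif_neg]
        intro h
        exact hi (by simp [Fin.castLEEmb_apply, Finset.mem_map]; exact ⟨⟨i, h⟩, by simp⟩)
    rw [key]; exact hw1
  · intro i; dsimp only; split
    · exact hzs (Set.mem_range_self _)
    · exact hzs (Set.mem_range_self _)
  · have key : ∀ (f : ι → EuclideanSpace ℝ (Fin n)),
        (∑ i : Fin (n+1), if h : (i : ℕ) < m then f (e.symm ⟨i, h⟩) else 0) = ∑ j, f j := by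
      intro f
      rw [← Finset.sum_subset (Finset.subset_univ ((Finset.univ : Finset (Fin m)).map
          (Fin.castLEEmb hm)))]
      · rw [Finset.sum_map]
        simp only [Fin.castLEEmb_apply]
        rw [show (∑ j : Fin m, if h : ((Fin.castLE hm j : Fin (n+1)) : ℕ) < m then
            f (e.symm ⟨_, h⟩) else 0) = ∑ j : Fin m, f (e.symm j) by
          apply Finset.sum_congr rfl; intro j _
          rw [dif_pos (show ((Fin.castLE hm j : Fin (n+1)) : ℕ) < m from j.isLt)]; rfl]
        exact Equiv.sum_comp e.symm f
      · intro i _ hi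
        rw [dif_neg]
        intro h
        exact hi (by simp [Fin.castLEEmb_apply, Finset.mem_map]; exact ⟨⟨i, h⟩, by simp⟩)
    have : (∑ i : Fin (n+1), (if h : (i : ℕ) < m then w (e.symm ⟨i, h⟩) else 0) •
        (if h : (i : ℕ) < m then z (e.symm ⟨i, h⟩) else z i₀))
        = ∑ i : Fin (n+1), if h : (i : ℕ) < m then w (e.symm ⟨i, h⟩) • z (e.symm ⟨i, h⟩) else 0 := by
      apply Finset.sum_congr rfl; intro i _
      split
      · rfl
      · simp
    rw [this, key (fun j => w j • z j)]
    exact hwz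

/-- If `C` is a closed subset of the nonnegative orthant in `ℝ^n`, then
`conv(C) + ℝ^n_+` is closed. -/
theorem stmt0 (n : ℕ) (C : Set (EuclideanSpace ℝ (Fin n)))
    (hC : IsClosed C) (hpos : C ⊆ {x | ∀ i, 0 ≤ x i}) :
    IsClosed (convexHull ℝ C + {x : EuclideanSpace ℝ (Fin n) | ∀ i, 0 ≤ x i}) := by
  classical
  set K : Set (EuclideanSpace ℝ (Fin n)) := {x | ∀ i, 0 ≤ x i} with hK
  have hKclosed : IsClosed K := orthant_closed
  have hconvpos : convexHull ℝ C ⊆ K := convexHull_min hpos orthant_convex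
  apply IsSeqClosed.isClosed
  intro u z hu hz
  choose y hy q hq huk using fun k => Set.mem_add.mp (hu k)
  -- Caratheodory representations (carath_fin from the helper file, to be merged)
  choose t c ht0 ht1 hcC hsum using fun k => carath_fin (hy k)
  -- bound on ‖u k‖
  obtain ⟨M, hM⟩ := (hz.norm).bddAbove_range
  have hMle : ∀ k, ‖u k‖ ≤ M := fun k => hM (Set.mem_range_self k)
  have hM0 : 0 ≤ M := le_trans (norm_nonneg _) (hMle 0)
  -- coordinates of terms are nonneg and dominated by u k
  have hw0 : ∀ k i j, 0 ≤ (t k i • c k i) j := by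
    intro k i j
    have : (t k i • c k i) j = t k i * (c k i) j := rfl
    rw [this]
    exact mul_nonneg (ht0 k i) (hpos (hcC k i) j)
  have hwle : ∀ k i j, (t k i • c k i) j ≤ u k j := by
    intro k i j
    have hyk : (y k) j = ∑ i', (t k i' • c k i') j := by
      rw [← hsum k]
      exact euclid_sum_apply _ _ _
    have h1 : (t k i • c k i) j ≤ (y k) j := by
      rw [hyk]
      exact Finset.single_le_sum (fun i' _ => hw0 k i' j) (Finset.mem_univ i)
    have h2 : (y k) j ≤ u k j := by
      have : u k j = (y k) j + (q k) j := by rw [← huk k]; rfl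
      rw [this]
      linarith [hq k j]
    linarith
  have hwnorm : ∀ k i, ‖t k i • c k i‖ ≤ M := fun k i =>
    le_trans (norm_le_of_coord_le (hw0 k i) (hwle k i)) (hMle k)
  -- compactness and subsequence
  set S : Set (Fin (n+1) → ℝ × EuclideanSpace ℝ (Fin n)) :=
    Set.univ.pi (fun _ => Set.Icc (0:ℝ) 1 ×ˢ Metric.closedBall 0 M) with hS
  have hScomp : IsCompact S :=
    isCompact_univ_pi fun _ => isCompact_Icc.prod (isCompact_closedBall _ _)
  set v : ℕ → Fin (n+1) → ℝ × EuclideanSpace ℝ (Fin n) :=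
    fun k i => (t k i, t k i • c k i) with hv
  have hvS : ∀ k, v k ∈ S := by
    intro k
    rw [hS, Set.mem_univ_pi]
    intro i
    refine ⟨⟨ht0 k i, ?_⟩, ?_⟩
    · rw [← ht1 k]
      exact Finset.single_le_sum (fun i' _ => ht0 k i') (Finset.mem_univ i)
    · simpa using hwnorm k i
  obtain ⟨L, _, φ, hφmono, hφlim⟩ := hScomp.tendsto_subseq hvS
  -- coordinate limits
  have hLi : ∀ i, Tendsto (fun k => v (φ k) i) atTop (𝓝 (L i)) :=
    fun i => ((continuous_apply i).tendsto L).comp hφlim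
  set τ : Fin (n+1) → ℝ := fun i => (L i).1 with hτ
  set ω : Fin (n+1) → EuclideanSpace ℝ (Fin n) := fun i => (L i).2 with hω
  have hτlim : ∀ i, Tendsto (fun k => t (φ k) i) atTop (𝓝 (τ i)) :=
    fun i => (continuous_fst.tendsto (L i)).comp (hLi i)
  have hωlim : ∀ i, Tendsto (fun k => t (φ k) i • c (φ k) i) atTop (𝓝 (ω i)) :=
    fun i => (continuous_snd.tendsto (L i)).comp (hLi i)
  have hτ0 : ∀ i, 0 ≤ τ i := fun i =>
    ge_of_tendsto (hτlim i) (Eventually.of_forall fun k => ht0 (φ k) i)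
  have hτ1 : ∑ i, τ i = 1 := by
    have h1 : Tendsto (fun k => ∑ i, t (φ k) i) atTop (𝓝 (∑ i, τ i)) :=
      tendsto_finset_sum _ fun i _ => hτlim i
    have h2 : (fun k => ∑ i, t (φ k) i) = fun _ => (1:ℝ) := by
      funext k; exact ht1 (φ k)
    rw [h2] at h1
    exact (tendsto_const_nhds_iff.mp h1).symm
  have hω0 : ∀ i j, 0 ≤ (ω i) j := by
    intro i j
    have : Tendsto (fun k => (t (φ k) i • c (φ k) i) j) atTop (𝓝 ((ω i) j)) :=
      ((EuclideanSpace.proj (𝕜 := ℝ) j).continuous.tendsto _).comp (hωlim i)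
    exact ge_of_tendsto this (Eventually.of_forall fun k => hw0 (φ k) i j)
  -- limits of y and q
  have hylim : Tendsto (fun k => y (φ k)) atTop (𝓝 (∑ i, ω i)) := by
    have h1 : Tendsto (fun k => ∑ i, t (φ k) i • c (φ k) i) atTop (𝓝 (∑ i, ω i)) :=
      tendsto_finset_sum _ fun i _ => hωlim i
    refine h1.congr fun k => hsum (φ k)
  have hqlim : Tendsto (fun k => q (φ k)) atTop (𝓝 (z - ∑ i, ω i)) := by
    have h1 : Tendsto (fun k => u (φ k)) atTop (𝓝 z) := hz.comp hφmono.tendsto_atTop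
    have h2 : Tendsto (fun k => u (φ k) - y (φ k)) atTop (𝓝 (z - ∑ i, ω i)) := h1.sub hylim
    refine h2.congr fun k => ?_
    rw [← huk (φ k)]; abel
  have hqK : z - ∑ i, ω i ∈ K :=
    hKclosed.mem_of_tendsto hqlim (Eventually.of_forall fun k => hq (φ k))
  -- points for the convex combination
  have hdC : ∀ i, τ i ≠ 0 → (τ i)⁻¹ • ω i ∈ C := by
    intro i hτi
    have hτpos : 0 < τ i := lt_of_le_of_ne (hτ0 i) (Ne.symm hτi)
    have hev : ∀ᶠ k in atTop, (t (φ k) i)⁻¹ • (t (φ k) i • c (φ k) i) = c (φ k) i := by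
      have : ∀ᶠ k in atTop, 0 < t (φ k) i :=
        (hτlim i).eventually (eventually_gt_nhds hτpos)
      filter_upwards [this] with k hk
      exact inv_smul_smul₀ hk.ne' _
    have h1 : Tendsto (fun k => (t (φ k) i)⁻¹ • (t (φ k) i • c (φ k) i)) atTop
        (𝓝 ((τ i)⁻¹ • ω i)) := ((hτlim i).inv₀ hτi).smul (hωlim i)
    have h2 : Tendsto (fun k => c (φ k) i) atTop (𝓝 ((τ i)⁻¹ • ω i)) := h1.congr' hev
    exact hC.mem_of_tendsto h2 (Eventually.of_forall fun k => hcC (φ k) i)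
  -- assemble
  set I : Finset (Fin (n+1)) := Finset.univ.filter (fun i => τ i ≠ 0) with hI
  have hsumτI : ∑ i ∈ I, τ i = 1 := by
    rw [hI, Finset.sum_filter_ne_zero]
    exact hτ1
  have hx₀ : ∑ i ∈ I, τ i • ((τ i)⁻¹ • ω i) ∈ convexHull ℝ C := by
    have := Finset.centerMass_mem_convexHull I
      (fun i _ => hτ0 i) (by rw [hsumτI]; norm_num)
      (fun i hi => hdC i (Finset.mem_filter.mp hi).2)
    rwa [Finset.centerMass_eq_of_sum_1 _ _ hsumτI] at this
  have hx₀eq : ∑ i ∈ I, τ i • ((τ i)⁻¹ • ω i) = ∑ i ∈ I, ω i := by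
    apply Finset.sum_congr rfl
    intro i hi
    exact smul_inv_smul₀ (Finset.mem_filter.mp hi).2 _
  have hrest : (z - ∑ i, ω i) + ∑ i ∈ Iᶜ, ω i ∈ K := by
    intro j
    have h1 : ((z - ∑ i, ω i) + ∑ i ∈ Iᶜ, ω i) j
        = (z - ∑ i, ω i) j + ∑ i ∈ Iᶜ, (ω i) j := by
      rw [show ((z - ∑ i, ω i) + ∑ i ∈ Iᶜ, ω i) j
          = (z - ∑ i, ω i) j + (∑ i ∈ Iᶜ, ω i) j from rfl, euclid_sum_apply]
    rw [h1]
    exact add_nonneg (hqK j) (Finset.sum_nonneg fun i _ => hω0 i j)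
  rw [Set.mem_add]
  refine ⟨_, hx₀, _, hrest, ?_⟩
  rw [hx₀eq]
  have : (∑ i ∈ I, ω i) + ∑ i ∈ Iᶜ, ω i = ∑ i, ω i := by
    rw [Finset.sum_add_sum_compl]
  rw [show (∑ i ∈ I, ω i) + ((z - ∑ i, ω i) + ∑ i ∈ Iᶜ, ω i)
      = ((∑ i ∈ I, ω i) + ∑ i ∈ Iᶜ, ω i) + (z - ∑ i, ω i) by abel, this]
  abel
end

section
/- Let π : R^n → R be subadditive and let ψ : R^n → R be a sublinear function with π ≤ ψ pointwise. Then π is Lipschitz continuous with Lipschitz constant L := max_{‖r‖=1} ψ(r). -/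
/-- If `π` is subadditive and bounded above by a sublinear `ψ`, then `π` is
Lipschitz continuous with Lipschitz constant `L = max_{‖r‖=1} ψ(r)`. -/
theorem stmt3 (n : ℕ) (π ψ : EuclideanSpace ℝ (Fin n) → ℝ)
    (hsub : ∀ u v, π (u + v) ≤ π u + π v)
    (hψsub : ∀ u v, ψ (u + v) ≤ ψ u + ψ v)
    (hψhom : ∀ (r : EuclideanSpace ℝ (Fin n)) (l : ℝ), 0 ≤ l → ψ (l • r) = l * ψ r)
    (hle : ∀ r, π r ≤ ψ r)
    (L : ℝ) (hL : IsGreatest (ψ '' {r : EuclideanSpace ℝ (Fin n) | ‖r‖ = 1}) L) :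
    ∀ x y, |π x - π y| ≤ L * ‖x - y‖ := by
  have key : ∀ v : EuclideanSpace ℝ (Fin n), ψ v ≤ L * ‖v‖ := by
    intro v
    by_cases hv : v = 0
    · have h0 : ψ (0 : EuclideanSpace ℝ (Fin n)) = 0 := by
        have := hψhom 0 0 le_rfl
        simpa using this
      obtain ⟨r, hr, hrL⟩ := hL.1
      have hL0 : 0 ≤ L := by
        have : 0 ≤ ψ r + ψ (-r) := by
          have := hψsub r (-r)
          simpa [h0] using this
        have hnr : ψ (-r) ≤ L := hL.2 ⟨-r, by simpa using hr, rfl⟩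
        nlinarith [hL.2 ⟨r, hr, rfl⟩]
      simp [hv, h0]
    · have hnorm : (0:ℝ) < ‖v‖ := norm_pos_iff.mpr hv
      set r := ‖v‖⁻¹ • v with hr
      have hru : ‖r‖ = 1 := by
        simp [hr, norm_smul, abs_of_pos (inv_pos.mpr hnorm), inv_mul_cancel₀ hnorm.ne']
      have hψr : ψ r ≤ L := hL.2 ⟨r, hru, rfl⟩
      have : ψ v = ‖v‖ * ψ r := by
        have := hψhom r ‖v‖ (norm_nonneg v)
        rw [← this, hr, smul_smul, mul_inv_cancel₀ hnorm.ne', one_smul]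
      rw [this]
      calc ‖v‖ * ψ r ≤ ‖v‖ * L := by nlinarith
        _ = L * ‖v‖ := mul_comm _ _
  intro x y
  have h1 : π x - π y ≤ L * ‖x - y‖ := by
    have hs := hsub (x - y) y
    simp only [sub_add_cancel] at hs
    have := le_trans (hle (x - y)) (key (x - y))
    linarith
  have h2 : π y - π x ≤ L * ‖x - y‖ := by
    have hs := hsub (y - x) x
    simp only [sub_add_cancel] at hs
    have := le_trans (hle (y - x)) (key (y - x))
    rw [norm_sub_rev x y]
    linarith
  exact abs_sub_le_iff.mpr ⟨h1, h2⟩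
end

section
/- Let V be a vector space over a field F and let C ⊆ V. Then the set of all affine combinations of points of C equals the intersection of all affine hyperplanes of V that contain C, where a hyperplane is a level set {v : F(v) = δ} of a nonzero linear functional F : V → F. (In particular, if C is not contained in any hyperplane, this intersection is all of V.) -/
/-- For a nonempty subset `C` of a vector space `V` over a field `F`, the set of
affine combinations of points of `C` (the affine span of `C`) equals the
intersection of all hyperplanes `{v | f v = δ}` (for nonzero linear functionals
`f`) containing `C`. -/
theorem stmt4 (F V : Type*) [Field F] [AddCommGroup V] [Module F V]
    (C : Set V) (hC : C.Nonempty) :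
    (affineSpan F C : Set V) =
      ⋂₀ {H : Set V | ∃ (f : V →ₗ[F] F) (δ : F), f ≠ 0 ∧ H = {v | f v = δ} ∧ C ⊆ H} := by
  obtain ⟨p, hp⟩ := hC
  apply Set.Subset.antisymm
  · intro v hv H hH
    obtain ⟨f, δ, hf0, rfl, hCH⟩ := hH
    have hle : affineSpan F C ≤
        AffineSubspace.comap f.toAffineMap (AffineSubspace.mk' δ (⊥ : Submodule F F)) := by
      apply affineSpan_le.2
      intro c hc
      have : f c = δ := hCH hc
      simp [AffineSubspace.mem_comap, AffineSubspace.mem_mk', this, sub_eq_zero]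
    have := hle hv
    simpa [AffineSubspace.mem_comap, AffineSubspace.mem_mk', sub_eq_zero] using this
  · intro v hv
    by_contra hvs
    set W := vectorSpan F C with hW
    have hvp : v - p ∉ W := by
      intro h
      apply hvs
      have h' : v -ᵥ p ∈ (affineSpan F C).direction := by
        rw [direction_affineSpan]; simpa using h
      exact (AffineSubspace.vsub_right_mem_direction_iff_mem (mem_affineSpan F hp) v).1 h'
    have hq : (Submodule.Quotient.mk (v - p) : V ⧸ W) ≠ 0 := by
      rw [Ne, Submodule.Quotient.mk_eq_zero]
      exact hvp
    have : ¬ ∀ g : Module.Dual F (V ⧸ W), g (Submodule.Quotient.mk (v - p)) = 0 := by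
      rw [Module.forall_dual_apply_eq_zero_iff]
      exact hq
    push_neg at this
    obtain ⟨g, hg⟩ := this
    set f : V →ₗ[F] F := g ∘ₗ W.mkQ with hf
    have hfvp : f (v - p) ≠ 0 := hg
    have hf0 : f ≠ 0 := by
      intro h
      rw [h] at hfvp
      simp at hfvp
    have hCH : C ⊆ {w | f w = f p} := by
      intro c hc
      have hcm : c - p ∈ W := by
        have := vsub_mem_vectorSpan F hc hp
        simpa using this
      have : f (c - p) = 0 := by
        show g (W.mkQ (c - p)) = 0
        rw [Submodule.mkQ_apply, (Submodule.Quotient.mk_eq_zero W).2 hcm, map_zero]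
      simp only [map_sub] at this
      exact sub_eq_zero.1 this
    have hvH := hv {w | f w = f p} ⟨f, f p, hf0, rfl, hCH⟩
    have : f (v - p) = 0 := by
      simp only [map_sub]
      exact sub_eq_zero.2 hvH
    exact hfvp this
end

section
/- Fix b ∈ R^n \ Z^n and let I_b be the set of finitely supported functions y : R^n → Z_+ with Σ_p p·y(p) ∈ b + Z^n. Suppose θ : R^n → R and α ∈ R are such that every y ∈ I_b satisfies Σ_p θ(p)y(p) = α. Then θ is additive: θ(p_1 + p_2) = θ(p_1) + θ(p_2) for all p_1, p_2 ∈ R^n. -/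
/-- Fix `b ∈ ℝ^n \ ℤ^n` and let `I_b` be the set of finitely supported
`y : ℝ^n → ℤ₊` with `∑ p, p • y(p) ∈ b + ℤ^n`. If `∑ p, θ(p) y(p) = α` for all
`y ∈ I_b`, then `θ` is additive. -/
theorem stmt7 (n : ℕ) (b : Fin n → ℝ)
    (hb : ¬ ∃ z : Fin n → ℤ, b = fun i => (z i : ℝ))
    (θ : (Fin n → ℝ) → ℝ) (α : ℝ)
    (hval : ∀ y : (Fin n → ℝ) →₀ ℕ,
      (∃ z : Fin n → ℤ, (∑ p ∈ y.support, (y p : ℝ) • p) = b + fun i => (z i : ℝ)) →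
      (∑ p ∈ y.support, (y p : ℝ) * θ p) = α) :
    ∀ p₁ p₂ : Fin n → ℝ, θ (p₁ + p₂) = θ p₁ + θ p₂ := by
  intro p₁ p₂
  set r : Fin n → ℝ := b - p₁ - p₂ with hr
  have key : ∀ y : (Fin n → ℝ) →₀ ℕ,
      y.sum (fun p k => (k : ℝ) • p) = b →
      y.sum (fun p k => (k : ℝ) * θ p) = α := by
    intro y hy
    exact hval y ⟨0, by
      show y.sum (fun p k => (k : ℝ) • p) = b + fun i => ((0 : ℤ) : ℝ)
      rw [hy]; funext i; simp⟩
  have h1 := key (Finsupp.single (p₁ + p₂) 1 + Finsupp.single r 1) (by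
    rw [Finsupp.sum_add_index' (fun p => by simp)
        (fun p k l => by push_cast; rw [add_smul]),
      Finsupp.sum_single_index (by simp), Finsupp.sum_single_index (by simp)]
    simp only [Nat.cast_one, one_smul, hr]
    abel)
  have h2 := key (Finsupp.single p₁ 1 + Finsupp.single p₂ 1 + Finsupp.single r 1) (by
    rw [Finsupp.sum_add_index' (fun p => by simp)
        (fun p k l => by push_cast; rw [add_smul]),
      Finsupp.sum_add_index' (fun p => by simp)
        (fun p k l => by push_cast; rw [add_smul]),
      Finsupp.sum_single_index (by simp), Finsupp.sum_single_index (by simp),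
      Finsupp.sum_single_index (by simp)]
    simp only [Nat.cast_one, one_smul, hr]
    abel)
  rw [Finsupp.sum_add_index' (fun p => by simp)
      (fun p k l => by push_cast; ring),
    Finsupp.sum_single_index (by simp), Finsupp.sum_single_index (by simp)] at h1
  rw [Finsupp.sum_add_index' (fun p => by simp)
      (fun p k l => by push_cast; ring),
    Finsupp.sum_add_index' (fun p => by simp)
      (fun p k l => by push_cast; ring),
    Finsupp.sum_single_index (by simp), Finsupp.sum_single_index (by simp),
    Finsupp.sum_single_index (by simp)] at h2
  simp only [Nat.cast_one, one_mul] at h1 h2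
  linarith
end

section
/- Let π : R^n → R be subadditive. Then for any a ∈ R^n, inf_{k∈Z_{>0}} π(ka)/k + inf_{k∈Z_{>0}} π(−ka)/k = inf_{k∈Z_{>0}} (π(ka) + π(−ka))/k, provided these infima are finite. -/
lemma aux_mul (n : ℕ) (π : (Fin n → ℝ) → ℝ)
    (hsub : ∀ u v, π (u + v) ≤ π u + π v) (x : Fin n → ℝ) :
    ∀ k : ℕ, 0 < k → π ((k : ℝ) • x) ≤ k * π x := by
  intro k hk
  induction k with
  | zero => exact absurd hk (lt_irrefl 0)
  | succ m ih =>
    rcases Nat.eq_zero_or_pos m with hm | hm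
    · subst hm; simp
    · have h1 : ((m + 1 : ℕ) : ℝ) • x = (m : ℝ) • x + x := by
        push_cast; rw [add_smul, one_smul]
      calc π ((↑(m + 1) : ℝ) • x) = π ((m : ℝ) • x + x) := by rw [h1]
        _ ≤ π ((m : ℝ) • x) + π x := hsub _ _
        _ ≤ m * π x + π x := by linarith [ih hm]
        _ = (↑(m + 1) : ℝ) * π x := by push_cast; ring

/-- For subadditive `π : ℝ^n → ℝ` and `a ∈ ℝ^n`, if the infima are finite then
`inf_{k>0} π(ka)/k + inf_{k>0} π(-ka)/k = inf_{k>0} (π(ka)+π(-ka))/k`. -/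
theorem stmt9 (n : ℕ) (π : (Fin n → ℝ) → ℝ)
    (hsub : ∀ u v, π (u + v) ≤ π u + π v) (a : Fin n → ℝ)
    (h1 : BddBelow {c : ℝ | ∃ k : ℕ, 0 < k ∧ c = π ((k : ℝ) • a) / k})
    (h2 : BddBelow {c : ℝ | ∃ k : ℕ, 0 < k ∧ c = π ((-(k : ℝ)) • a) / k}) :
    sInf {c : ℝ | ∃ k : ℕ, 0 < k ∧ c = π ((k : ℝ) • a) / k} +
      sInf {c : ℝ | ∃ k : ℕ, 0 < k ∧ c = π ((-(k : ℝ)) • a) / k} =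
    sInf {c : ℝ | ∃ k : ℕ, 0 < k ∧ c = (π ((k : ℝ) • a) + π ((-(k : ℝ)) • a)) / k} := by
  set A := {c : ℝ | ∃ k : ℕ, 0 < k ∧ c = π ((k : ℝ) • a) / k} with hA
  set B := {c : ℝ | ∃ k : ℕ, 0 < k ∧ c = π ((-(k : ℝ)) • a) / k} with hB
  set C := {c : ℝ | ∃ k : ℕ, 0 < k ∧ c = (π ((k : ℝ) • a) + π ((-(k : ℝ)) • a)) / k} with hC
  have hAne : A.Nonempty := ⟨π ((1 : ℝ) • a) / 1, 1, by norm_num⟩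
  have hBne : B.Nonempty := ⟨π ((-(1 : ℝ)) • a) / 1, 1, by norm_num⟩
  have hCne : C.Nonempty := ⟨(π ((1 : ℝ) • a) + π ((-(1 : ℝ)) • a)) / 1, 1, by norm_num⟩
  -- each element of C is ≥ sInf A + sInf B
  have hClb : ∀ c ∈ C, sInf A + sInf B ≤ c := by
    rintro c ⟨k, hk, rfl⟩
    have hkR : (0 : ℝ) < k := by exact_mod_cast hk
    have ha : sInf A ≤ π ((k : ℝ) • a) / k := csInf_le h1 ⟨k, hk, rfl⟩
    have hb : sInf B ≤ π ((-(k : ℝ)) • a) / k := csInf_le h2 ⟨k, hk, rfl⟩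
    have : (π ((k : ℝ) • a) + π ((-(k : ℝ)) • a)) / k
        = π ((k : ℝ) • a) / k + π ((-(k : ℝ)) • a) / k := by ring
    rw [this]; linarith
  have hCbdd : BddBelow C := ⟨sInf A + sInf B, hClb⟩
  -- key: sInf C ≤ f h / h + g k / k for all h k > 0
  have key : ∀ h k : ℕ, 0 < h → 0 < k →
      sInf C ≤ π ((h : ℝ) • a) / h + π ((-(k : ℝ)) • a) / k := by
    intro h k hh hk
    have hhR : (0 : ℝ) < h := by exact_mod_cast hh
    have hkR : (0 : ℝ) < k := by exact_mod_cast hk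
    set l := h * k with hl
    have hlpos : 0 < l := Nat.mul_pos hh hk
    have hlR : (0 : ℝ) < l := by exact_mod_cast hlpos
    have e1 : π ((l : ℝ) • a) ≤ k * π ((h : ℝ) • a) := by
      have : ((l : ℝ)) • a = (k : ℝ) • ((h : ℝ) • a) := by
        rw [smul_smul]; push_cast [hl]; ring_nf
      rw [this]; exact aux_mul n π hsub _ k hk
    have e2 : π ((-(l : ℝ)) • a) ≤ h * π ((-(k : ℝ)) • a) := by
      have : ((-(l : ℝ))) • a = (h : ℝ) • ((-(k : ℝ)) • a) := by
        rw [smul_smul]; push_cast [hl]; ring_nf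
      rw [this]; exact aux_mul n π hsub _ h hh
    have hmem : (π ((l : ℝ) • a) + π ((-(l : ℝ)) • a)) / l ∈ C := ⟨l, hlpos, rfl⟩
    have h3 : sInf C ≤ (π ((l : ℝ) • a) + π ((-(l : ℝ)) • a)) / l := csInf_le hCbdd hmem
    have h4 : (π ((l : ℝ) • a) + π ((-(l : ℝ)) • a)) / l
        ≤ π ((h : ℝ) • a) / h + π ((-(k : ℝ)) • a) / k := by
      rw [div_add_div _ _ (ne_of_gt hhR) (ne_of_gt hkR), div_le_div_iff₀ hlR (by positivity)]
      have hlcast : (l : ℝ) = h * k := by push_cast [hl]; ring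
      rw [hlcast] at e1 e2 ⊢
      nlinarith [e1, e2, hhR, hkR]
    linarith
  apply le_antisymm
  · exact le_csInf hCne hClb
  · -- sInf C ≤ sInf A + sInf B
    have : sInf C - sInf B ≤ sInf A := by
      apply le_csInf hAne
      rintro x ⟨h, hh, rfl⟩
      have : sInf C - π ((h : ℝ) • a) / h ≤ sInf B := by
        apply le_csInf hBne
        rintro y ⟨k, hk, rfl⟩
        linarith [key h k hh hk]
      linarith
    linarith
end

section
/- Fix a finite set P ⊆ R^n and b ∈ R^n. Consider the set Y of vectors y ∈ Z^P_+ such that Σ_{p∈P} p·y(p) ∈ b + Z^n. Then the convex hull of Y in R^P is a rational polyhedron (i.e., a polyhedron definable by finitely many linear inequalities with rational coefficient vectors). -/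
instance : IsWellOrder ℕ (·<·) := inferInstance
theorem exists_fin_basis {m : ℕ} (S : Set (Fin m → ℕ)) :
    ∃ B : Finset (Fin m → ℕ), ↑B ⊆ S ∧ ∀ s ∈ S, ∃ b ∈ B, b ≤ s := by
  set M : Set (Fin m → ℕ) := {x | x ∈ S ∧ ∀ u ∈ S, u ≤ x → u = x} with hM
  have hanti : IsAntichain (· ≤ ·) M := by
    intro a ha b hb hne hle
    exact hne (hb.2 a ha.1 hle)
  have hfin : M.Finite := hanti.finite_of_partiallyWellOrderedOn (Set.isPWO_of_wellQuasiOrderedLE M)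
  refine ⟨hfin.toFinset, ?_, ?_⟩
  · rw [Set.Finite.coe_toFinset]
    exact fun x hx => hx.1
  · intro s hs
    set T : Set (Fin m → ℕ) := {t | t ∈ S ∧ t ≤ s} with hT
    have hwf : T.IsWF := (Set.isPWO_of_wellQuasiOrderedLE T).isWF
    have hne : T.Nonempty := ⟨s, hs, le_rfl⟩
    refine ⟨hwf.min hne, ?_, ?_⟩
    · simp only [Set.Finite.mem_toFinset]
      refine ⟨(hwf.min_mem hne).1, fun u hu hle => ?_⟩
      by_contra hne'
      exact hwf.not_lt_min hne ⟨hu, hle.trans (hwf.min_mem hne).2⟩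
        (lt_of_le_of_ne hle hne')
    · exact (hwf.min_mem hne).2

namespace FM10
variable {n m : ℕ} (p : Fin m → Fin n → ℝ) (b : Fin n → ℝ)

def sc (y : Fin m → ℕ) : Fin n → ℝ := ∑ j, (y j : ℝ) • p j

def inY (y : Fin m → ℕ) : Prop := ∃ z : Fin n → ℤ, sc p y = b + fun i => (z i : ℝ)
def inY0 (y : Fin m → ℕ) : Prop := ∃ z : Fin n → ℤ, sc p y = fun i => (z i : ℝ)

lemma sc_add (u v : Fin m → ℕ) : sc p (u + v) = sc p u + sc p v := by
  rw [sc, sc, sc, ← Finset.sum_add_distrib]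
  refine Finset.sum_congr rfl fun j _ => ?_
  have : ((u + v) j : ℝ) = (u j : ℝ) + (v j : ℝ) := by
    show ((u j + v j : ℕ) : ℝ) = _; push_cast; ring
  rw [this, add_smul]

lemma sc_sub {u v : Fin m → ℕ} (h : v ≤ u) : sc p (u - v) = sc p u - sc p v := by
  have : (u - v) + v = u := by
    funext j; exact Nat.sub_add_cancel (h j)
  have h2 := sc_add p (u - v) v
  rw [this] at h2
  rw [h2]; abel

lemma inY.add {y w : Fin m → ℕ} (hy : inY p b y) (hw : inY0 p w) : inY p b (y + w) := by
  obtain ⟨z1, hz1⟩ := hy; obtain ⟨z2, hz2⟩ := hw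
  exact ⟨z1 + z2, by rw [sc_add, hz1, hz2]; funext i; simp only [Pi.add_apply, Pi.sub_apply]; push_cast; ring⟩

lemma inY.sub {y e : Fin m → ℕ} (hy : inY p b y) (he : inY p b e) (hle : e ≤ y) :
    inY0 p (y - e) := by
  obtain ⟨z1, hz1⟩ := hy; obtain ⟨z2, hz2⟩ := he
  exact ⟨z1 - z2, by rw [sc_sub p hle, hz1, hz2]; funext i; simp only [Pi.add_apply, Pi.sub_apply]; push_cast; ring⟩

lemma inY0.sub {y w : Fin m → ℕ} (hy : inY0 p y) (hw : inY0 p w) (hle : w ≤ y) :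
    inY0 p (y - w) := by
  obtain ⟨z1, hz1⟩ := hy; obtain ⟨z2, hz2⟩ := hw
  exact ⟨z1 - z2, by rw [sc_sub p hle, hz1, hz2]; funext i; simp only [Pi.add_apply, Pi.sub_apply]; push_cast; ring⟩

lemma inY.nsmul_add {y w : Fin m → ℕ} (hy : inY p b y) (hw : inY0 p w) (k : ℕ) :
    inY p b (y + k • w) := by
  induction k with
  | zero => simpa using hy
  | succ k ih =>
      have : y + (k + 1) • w = (y + k • w) + w := by
        funext j; simp [add_smul]; ring
      rw [this]; exact ih.add p b hw

/-- finite generation of Y₀ -/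
theorem exists_gens : ∃ (br : ℕ) (R : Fin br → (Fin m → ℕ)),
    (∀ i, inY0 p (R i)) ∧
    ∀ w, inY0 p w → ∃ c : Fin br → ℕ, w = ∑ i, c i • R i := by
  obtain ⟨B, hBS, hBcov⟩ := exists_fin_basis {w : Fin m → ℕ | inY0 p w ∧ w ≠ 0}
  refine ⟨B.card, fun i => B.equivFin.symm i, fun i => (hBS (B.equivFin.symm i).2).1, ?_⟩
  set R : Fin B.card → (Fin m → ℕ) := fun i => B.equivFin.symm i with hR
  suffices h : ∀ N w, (∑ j, w j) = N → inY0 p w → ∃ c : Fin B.card → ℕ, w = ∑ i, c i • R i by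
    intro w hw; exact h _ w rfl hw
  intro N
  induction N using Nat.strong_induction_on with
  | _ N ih =>
    intro w hN hw
    by_cases hw0 : w = 0
    · exact ⟨0, by simp [hw0]⟩
    · obtain ⟨r, hrB, hrle⟩ := hBcov w ⟨hw, hw0⟩
      have hr0 : r ≠ 0 := (hBS hrB).2
      have hrY : inY0 p r := (hBS hrB).1
      set i0 : Fin B.card := B.equivFin ⟨r, hrB⟩ with hi0
      have hRi0 : R i0 = r := by simp [hR, hi0]
      -- sum decreases
      have hrpos : 0 < ∑ j, r j := by
        rcases Function.ne_iff.1 hr0 with ⟨j, hj⟩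
        exact Finset.sum_pos' (fun _ _ => Nat.zero_le _)
          ⟨j, Finset.mem_univ j, Nat.pos_of_ne_zero hj⟩
      have hsub : (∑ j, (w - r) j) < N := by
        have hkey : (∑ j, (w - r) j) + ∑ j, r j = N := by
          rw [← hN, ← Finset.sum_add_distrib]
          exact Finset.sum_congr rfl fun j _ => Nat.sub_add_cancel (hrle j)
        omega
      obtain ⟨c, hc⟩ := ih _ hsub (w - r) rfl (hw.sub p hrY hrle)
      set c' : Fin B.card → ℕ := c + Pi.single i0 1 with hc'
      refine ⟨c', ?_⟩
      have : w = (w - r) + r := by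
        funext j; simp [Nat.sub_add_cancel (hrle j)]
      have hsum : ∑ i, c' i • R i = (∑ i, c i • R i) + R i0 := by
        simp only [hc', Pi.add_apply, add_smul, Finset.sum_add_distrib]
        congr 1
        rw [Finset.sum_eq_single i0]
        · simp
        · intro i _ hne; simp [Pi.single_apply, hne]
        · intro h; exact absurd (Finset.mem_univ i0) h
      rw [hsum, hRi0, ← hc]
      exact this


def cv (y : Fin m → ℕ) : Fin m → ℝ := fun j => (y j : ℝ)

lemma cv_add (u v : Fin m → ℕ) : cv (u + v) = cv u + cv v := by
  funext j; show ((u j + v j : ℕ) : ℝ) = _; push_cast; rfl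

lemma cv_sum {k : ℕ} (c : Fin k → ℕ) (R : Fin k → (Fin m → ℕ)) :
    cv (∑ i, c i • R i) = ∑ i, (c i : ℝ) • cv (R i) := by
  funext j
  show ((∑ i, c i • R i) j : ℝ) = _
  rw [Finset.sum_apply]
  push_cast
  rw [Finset.sum_apply]
  exact Finset.sum_congr rfl fun i _ => by simp [cv]

def Yr : Set (Fin m → ℝ) := {y | ∃ yi : Fin m → ℕ, y = cv yi ∧ inY p b yi}

/-- the ray lemma -/
lemma ray_mem {r : Fin m → ℕ} (hr : inY0 p r) {x : Fin m → ℝ}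
    (hx : x ∈ convexHull ℝ (Yr p b)) {t : ℝ} (ht : 0 ≤ t) :
    x + t • cv r ∈ convexHull ℝ (Yr p b) := by
  set C : Set (Fin m → ℝ) := {x | ∀ t : ℝ, 0 ≤ t → x + t • cv r ∈ convexHull ℝ (Yr p b)} with hC
  suffices hsub : convexHull ℝ (Yr p b) ⊆ C from hsub hx t ht
  apply convexHull_min
  · rintro y ⟨yi, rfl, hyi⟩ t ht
    set k : ℕ := ⌊t⌋₊ with hk
    set s : ℝ := t - k with hs
    have hs0 : 0 ≤ s := by
      have := Nat.floor_le ht; simpa [hs] using this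
    have hs1 : s ≤ 1 := by
      have := (Nat.lt_floor_add_one t).le
      simp only [hs]; linarith
    have hq1 : cv (yi + k • r) ∈ Yr p b := ⟨_, rfl, hyi.nsmul_add p b hr k⟩
    have hq2 : cv (yi + (k+1) • r) ∈ Yr p b := ⟨_, rfl, hyi.nsmul_add p b hr (k+1)⟩
    have e1 : cv (yi + k • r) = cv yi + (k : ℝ) • cv r := by
      rw [cv_add]; congr 1; funext j
      simp only [Pi.smul_apply, smul_eq_mul, cv]; push_cast; ring
    have e2 : cv (yi + (k+1) • r) = cv yi + ((k : ℝ) + 1) • cv r := by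
      rw [cv_add]; congr 1; funext j
      simp only [Pi.smul_apply, smul_eq_mul, cv]; push_cast; ring
    have key : cv yi + t • cv r
        = (1 - s) • (cv yi + (k : ℝ) • cv r) + s • (cv yi + ((k : ℝ) + 1) • cv r) := by
      have ht' : t = (k : ℝ) + s := by rw [hs]; ring
      rw [ht']
      module
    rw [key, ← e1, ← e2]
    exact (convex_convexHull ℝ (Yr p b)) (subset_convexHull ℝ _ hq1) (subset_convexHull ℝ _ hq2) (by linarith) hs0 (by ring)
  · intro x₁ hx₁ x₂ hx₂ a c ha hc hac
    intro t ht
    have h1 : a • (x₁ + t • cv r) + c • (x₂ + t • cv r)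
        = a • x₁ + c • x₂ + (a + c) • (t • cv r) := by module
    rw [hac, one_smul] at h1
    rw [← h1]
    exact (convex_convexHull ℝ (Yr p b)) (hx₁ t ht) (hx₂ t ht) ha hc hac

theorem conv_eq {a br : ℕ} (E : Fin a → (Fin m → ℕ)) (R : Fin br → (Fin m → ℕ))
    (hE : ∀ i, inY p b (E i)) (hR : ∀ i, inY0 p (R i))
    (hrep : ∀ y, inY p b y → ∃ (i : Fin a) (c : Fin br → ℕ), y = E i + ∑ r, c r • R r) :
    convexHull ℝ (Yr p b) = {x | ∃ (lam : Fin a → ℝ) (mu : Fin br → ℝ),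
      (∀ i, 0 ≤ lam i) ∧ (∑ i, lam i = 1) ∧ (∀ i, 0 ≤ mu i) ∧
      x = (∑ i, lam i • cv (E i)) + ∑ i, mu i • cv (R i)} := by
  apply le_antisymm
  · apply convexHull_min
    · rintro y ⟨yi, rfl, hyi⟩
      obtain ⟨i, c, hc⟩ := hrep yi hyi
      refine ⟨fun e => if e = i then 1 else 0, fun r => (c r : ℝ),
        fun e => by positivity, by simp, fun r => by positivity, ?_⟩
      have : ∑ e, (if e = i then (1:ℝ) else 0) • cv (E e) = cv (E i) := by
        rw [Finset.sum_eq_single i] <;> simp +contextual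
      rw [this, hc, cv_add, cv_sum]
    · rintro x₁ ⟨l₁, m₁, hl₁, hs₁, hm₁, hx₁⟩ x₂ ⟨l₂, m₂, hl₂, hs₂, hm₂, hx₂⟩ a' c' ha hc hac
      refine ⟨fun e => a' * l₁ e + c' * l₂ e, fun r => a' * m₁ r + c' * m₂ r,
        fun e => by have := hl₁ e; have := hl₂ e; positivity,
        ?_, fun r => by have := hm₁ r; have := hm₂ r; positivity, ?_⟩
      · rw [Finset.sum_add_distrib, ← Finset.mul_sum, ← Finset.mul_sum, hs₁, hs₂, mul_one, mul_one]; exact hac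
      · rw [hx₁, hx₂]
        rw [Finset.sum_congr rfl (fun e _ => add_smul (a' * l₁ e) (c' * l₂ e) (cv (E e))),
          Finset.sum_congr rfl (fun r _ => add_smul (a' * m₁ r) (c' * m₂ r) (cv (R r))),
          Finset.sum_add_distrib, Finset.sum_add_distrib]
        simp only [mul_smul, ← Finset.smul_sum]
        module
  · rintro x ⟨lam, mu, hlam, hsum, hmu, rfl⟩
    have hbase : (∑ i, lam i • cv (E i)) ∈ convexHull ℝ (Yr p b) := by
      refine (convex_convexHull ℝ (Yr p b)).sum_mem (fun i _ => hlam i) hsum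
        (fun i _ => subset_convexHull ℝ _ ⟨E i, rfl, hE i⟩)
    have : ∀ s : Finset (Fin br),
        (∑ i, lam i • cv (E i)) + ∑ i ∈ s, mu i • cv (R i) ∈ convexHull ℝ (Yr p b) := by
      intro s
      induction s using Finset.induction_on with
      | empty => simpa using hbase
      | insert _ _ hnotmem ih =>
          rw [Finset.sum_insert hnotmem, ← add_assoc, add_comm _ (mu _ • cv (R _)), add_assoc,
            add_comm (mu _ • cv (R _)) _]
          exact ray_mem p b (hR _) ih (hmu _)
    simpa using this Finset.univ


section FMelim
variable {ι : Type*} [Fintype ι] [DecidableEq ι]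

def lSat (c : (ι → ℚ) × ℚ) (x : ι → ℝ) : Prop := (∑ j, (c.1 j : ℝ) * x j) ≤ (c.2 : ℝ)
def lSol (L : List ((ι → ℚ) × ℚ)) : Set (ι → ℝ) := {x | ∀ c ∈ L, lSat c x}

def S0 (j₀ : ι) (c : (ι → ℚ) × ℚ) (x : ι → ℝ) : ℝ :=
  ∑ j, (if j = j₀ then 0 else (c.1 j : ℝ)) * x j

lemma sum_split (j₀ : ι) (c : (ι → ℚ) × ℚ) (x : ι → ℝ) :
    (∑ j, (c.1 j : ℝ) * x j) = (c.1 j₀ : ℝ) * x j₀ + S0 j₀ c x := by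
  have h1 := Fintype.sum_eq_add_sum_compl j₀ (fun j => (c.1 j : ℝ) * x j)
  have h2 := Fintype.sum_eq_add_sum_compl j₀ (fun j => (if j = j₀ then 0 else (c.1 j : ℝ)) * x j)
  rw [S0, h2, if_pos rfl, zero_mul, zero_add, h1]
  exact congrArg _ (Finset.sum_congr rfl fun j hj =>
    by rw [if_neg (by simpa using hj)]).symm

lemma S0_update (j₀ : ι) (c : (ι → ℚ) × ℚ) (x : ι → ℝ) (t : ℝ) :
    S0 j₀ c (Function.update x j₀ t) = S0 j₀ c x := by
  refine Finset.sum_congr rfl fun j _ => ?_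
  by_cases h : j = j₀
  · simp [h]
  · rw [Function.update_of_ne h]

lemma sat_update (j₀ : ι) (c : (ι → ℚ) × ℚ) (x : ι → ℝ) (t : ℝ) :
    lSat c (Function.update x j₀ t) ↔ (c.1 j₀ : ℝ) * t + S0 j₀ c x ≤ (c.2 : ℝ) := by
  rw [lSat, sum_split j₀, S0_update, Function.update_self]

def combo (j₀ : ι) (cp cn : (ι → ℚ) × ℚ) : (ι → ℚ) × ℚ :=
  (fun j => if j = j₀ then 0 else cp.1 j / cp.1 j₀ - cn.1 j / cn.1 j₀,
   cp.2 / cp.1 j₀ - cn.2 / cn.1 j₀)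

lemma combo_sum (j₀ : ι) (cp cn : (ι → ℚ) × ℚ) (x : ι → ℝ) :
    (∑ j, ((combo j₀ cp cn).1 j : ℝ) * x j)
      = S0 j₀ cp x / (cp.1 j₀ : ℝ) - S0 j₀ cn x / (cn.1 j₀ : ℝ) := by
  rw [S0, S0, Finset.sum_div, Finset.sum_div, ← Finset.sum_sub_distrib]
  refine Finset.sum_congr rfl fun j _ => ?_
  by_cases h : j = j₀
  · simp [combo, h]
  · simp only [combo, if_neg h]
    push_cast
    ring

def elim (j₀ : ι) (L : List ((ι → ℚ) × ℚ)) : List ((ι → ℚ) × ℚ) :=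
  (L.filter fun c => decide (c.1 j₀ = 0)) ++
    (L.filter fun c => decide (0 < c.1 j₀)).flatMap
      (fun cp => (L.filter fun c => decide (c.1 j₀ < 0)).map (combo j₀ cp))

lemma elim_coeff_zero (j₀ : ι) (L : List ((ι → ℚ) × ℚ)) :
    ∀ c ∈ elim j₀ L, c.1 j₀ = 0 := by
  intro c hc
  rw [elim, List.mem_append] at hc
  rcases hc with hc | hc
  · have := (List.mem_filter.1 hc).2
    simpa using this
  · rw [List.mem_flatMap] at hc
    obtain ⟨cp, _, hc⟩ := hc
    rw [List.mem_map] at hc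
    obtain ⟨cn, _, rfl⟩ := hc
    simp [combo]

lemma elim_zero_preserve (j₀ : ι) (L : List ((ι → ℚ) × ℚ)) (j' : ι)
    (hL : ∀ c ∈ L, c.1 j' = 0) : ∀ c ∈ elim j₀ L, c.1 j' = 0 := by
  intro c hc
  rw [elim, List.mem_append] at hc
  rcases hc with hc | hc
  · exact hL c (List.mem_filter.1 hc).1
  · rw [List.mem_flatMap] at hc
    obtain ⟨cp, hcp, hc⟩ := hc
    rw [List.mem_map] at hc
    obtain ⟨cn, hcn, rfl⟩ := hc
    have h1 := hL cp (List.mem_filter.1 hcp).1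
    have h2 := hL cn (List.mem_filter.1 hcn).1
    simp [combo, h1, h2]

-- helper: list sandwich
lemma exists_le_list (l : List ℝ) : ∃ t : ℝ, ∀ u ∈ l, t ≤ u := by
  induction l with
  | nil => exact ⟨0, by simp⟩
  | cons a tl ih =>
      obtain ⟨t, ht⟩ := ih
      exact ⟨min t a, by
        intro u hu
        rcases List.mem_cons.1 hu with rfl | hu
        · exact min_le_right _ _
        · exact (min_le_left _ _).trans (ht u hu)⟩

lemma exists_max_mem (a : ℝ) (l : List ℝ) :
    ∃ M, M ∈ a :: l ∧ ∀ u ∈ a :: l, u ≤ M := by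
  induction l generalizing a with
  | nil => exact ⟨a, by simp, by simp⟩
  | cons b tl ih =>
      obtain ⟨M, hM, hMub⟩ := ih (max a b)
      refine ⟨M, ?_, ?_⟩
      · rcases List.mem_cons.1 hM with rfl | hM
        · rcases le_total a b with h | h
          · simp [max_eq_right h]
          · simp [max_eq_left h]
        · simp [hM]
      · intro u hu
        rcases List.mem_cons.1 hu with rfl | hu
        · exact le_trans (le_max_left _ _) (hMub _ (List.mem_cons_self))
        · rcases List.mem_cons.1 hu with rfl | hu
          · exact le_trans (le_max_right _ _) (hMub _ (List.mem_cons_self))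
          · exact hMub _ (List.mem_cons_of_mem _ hu)

lemma exists_between (ls us : List ℝ) (h : ∀ l ∈ ls, ∀ u ∈ us, l ≤ u) :
    ∃ t : ℝ, (∀ l ∈ ls, l ≤ t) ∧ (∀ u ∈ us, t ≤ u) := by
  cases ls with
  | nil =>
      obtain ⟨t, ht⟩ := exists_le_list us
      exact ⟨t, by simp, ht⟩
  | cons a tl =>
      obtain ⟨M, hMmem, hMub⟩ := exists_max_mem a tl
      exact ⟨M, hMub, fun u hu => h M hMmem u hu⟩

theorem elim_sound (j₀ : ι) (L : List ((ι → ℚ) × ℚ)) (x : ι → ℝ) :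
    x ∈ lSol (elim j₀ L) ↔ ∃ t : ℝ, Function.update x j₀ t ∈ lSol L := by
  constructor
  · intro hx
    set ls : List ℝ := (L.filter fun c => decide (c.1 j₀ < 0)).map
      (fun c => ((c.2 : ℝ) - S0 j₀ c x) / (c.1 j₀ : ℝ)) with hls
    set us : List ℝ := (L.filter fun c => decide (0 < c.1 j₀)).map
      (fun c => ((c.2 : ℝ) - S0 j₀ c x) / (c.1 j₀ : ℝ)) with hus
    have hlu : ∀ l ∈ ls, ∀ u ∈ us, l ≤ u := by
      intro l hl u hu
      rw [hls, List.mem_map] at hl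
      obtain ⟨cn, hcn, rfl⟩ := hl
      rw [hus, List.mem_map] at hu
      obtain ⟨cp, hcp, rfl⟩ := hu
      have hmem : combo j₀ cp cn ∈ elim j₀ L := by
        rw [elim, List.mem_append, List.mem_flatMap]
        exact Or.inr ⟨cp, hcp, List.mem_map.2 ⟨cn, hcn, rfl⟩⟩
      have hsat := hx _ hmem
      rw [lSat, combo_sum] at hsat
      have hp : (0 : ℚ) < cp.1 j₀ := by simpa using (List.mem_filter.1 hcp).2
      have hn : cn.1 j₀ < 0 := by simpa using (List.mem_filter.1 hcn).2
      have hpR : (0 : ℝ) < (cp.1 j₀ : ℝ) := by exact_mod_cast hp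
      have hnR : ((cn.1 j₀ : ℝ)) < 0 := by exact_mod_cast hn
      have hc2 : (((combo j₀ cp cn).2 : ℚ) : ℝ)
          = (cp.2 : ℝ) / (cp.1 j₀ : ℝ) - (cn.2 : ℝ) / (cn.1 j₀ : ℝ) := by
        show (((cp.2 / cp.1 j₀ - cn.2 / cn.1 j₀ : ℚ)) : ℝ) = _
        push_cast; ring
      rw [hc2] at hsat
      rw [sub_div, sub_div]
      have e1 : (S0 j₀ cp x) / (cp.1 j₀ : ℝ) = S0 j₀ cp x / (cp.1 j₀ : ℝ) := rfl
      linarith [hsat, sub_div (cp.2 : ℝ) (S0 j₀ cp x) ((cp.1 j₀ : ℝ)),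
        sub_div (cn.2 : ℝ) (S0 j₀ cn x) ((cn.1 j₀ : ℝ))]
    obtain ⟨t, hlt, htu⟩ := exists_between ls us hlu
    refine ⟨t, fun c hc => ?_⟩
    rw [sat_update]
    rcases lt_trichotomy (c.1 j₀) 0 with h | h | h
    · have hmem : ((c.2 : ℝ) - S0 j₀ c x) / (c.1 j₀ : ℝ) ∈ ls :=
        List.mem_map.2 ⟨c, List.mem_filter.2 ⟨hc, by simpa using h⟩, rfl⟩
      have hle := hlt _ hmem
      have hcR : ((c.1 j₀ : ℝ)) < 0 := by exact_mod_cast h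
      have := (div_le_iff_of_neg hcR).1 hle
      rw [mul_comm t] at this
      linarith
    · have hsat := hx c (by
        rw [elim, List.mem_append]
        exact Or.inl (List.mem_filter.2 ⟨hc, by simpa using h⟩))
      rw [lSat, sum_split j₀, h] at hsat
      rw [h]
      push_cast at hsat ⊢
      linarith
    · have hmem : ((c.2 : ℝ) - S0 j₀ c x) / (c.1 j₀ : ℝ) ∈ us :=
        List.mem_map.2 ⟨c, List.mem_filter.2 ⟨hc, by simpa using h⟩, rfl⟩
      have hle := htu _ hmem
      have hcR : (0 : ℝ) < ((c.1 j₀ : ℝ)) := by exact_mod_cast h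
      have := (le_div_iff₀ hcR).1 hle
      rw [mul_comm t] at this
      linarith
  · rintro ⟨t, ht⟩ c' hc'
    rw [elim, List.mem_append] at hc'
    rcases hc' with hc | hc
    · have hmem := List.mem_filter.1 hc
      have h0 : c'.1 j₀ = 0 := by simpa using hmem.2
      have hs := ht c' hmem.1
      rw [sat_update, h0] at hs
      rw [lSat, sum_split j₀, h0]
      push_cast at hs ⊢
      linarith
    · rw [List.mem_flatMap] at hc
      obtain ⟨cp, hcp, hc⟩ := hc
      rw [List.mem_map] at hc
      obtain ⟨cn, hcn, rfl⟩ := hc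
      have hp : (0 : ℚ) < cp.1 j₀ := by simpa using (List.mem_filter.1 hcp).2
      have hn : cn.1 j₀ < 0 := by simpa using (List.mem_filter.1 hcn).2
      have hpR : (0 : ℝ) < (cp.1 j₀ : ℝ) := by exact_mod_cast hp
      have hnR : ((cn.1 j₀ : ℝ)) < 0 := by exact_mod_cast hn
      have hsp := ht cp (List.mem_filter.1 hcp).1
      have hsn := ht cn (List.mem_filter.1 hcn).1
      rw [sat_update] at hsp hsn
      have hc2 : (((combo j₀ cp cn).2 : ℚ) : ℝ)
          = (cp.2 : ℝ) / (cp.1 j₀ : ℝ) - (cn.2 : ℝ) / (cn.1 j₀ : ℝ) := by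
        show (((cp.2 / cp.1 j₀ - cn.2 / cn.1 j₀ : ℚ)) : ℝ) = _
        push_cast; ring
      rw [lSat, combo_sum, hc2]
      have h1 : t ≤ ((cp.2 : ℝ) - S0 j₀ cp x) / (cp.1 j₀ : ℝ) :=
        (le_div_iff₀ hpR).2 (by rw [mul_comm t]; linarith)
      have h2 : ((cn.2 : ℝ) - S0 j₀ cn x) / (cn.1 j₀ : ℝ) ≤ t :=
        (div_le_iff_of_neg hnR).2 (by rw [mul_comm t]; linarith)
      have h3 := h2.trans h1
      rw [sub_div, sub_div] at h3
      linarith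

theorem elimList (js : List ι) (L : List ((ι → ℚ) × ℚ)) :
    ∃ L' : List ((ι → ℚ) × ℚ),
      (∀ c ∈ L', ∀ j ∈ js, c.1 j = 0) ∧
      (∀ j', (∀ c ∈ L, c.1 j' = 0) → ∀ c ∈ L', c.1 j' = 0) ∧
      ∀ x, x ∈ lSol L' ↔ ∃ x', (∀ i, i ∉ js → x' i = x i) ∧ x' ∈ lSol L := by
  induction js generalizing L with
  | nil =>
      refine ⟨L, by simp, fun j' h => h, fun x => ?_⟩
      constructor
      · intro hx; exact ⟨x, fun i _ => rfl, hx⟩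
      · rintro ⟨x', hx', hsol⟩
        have hxx : x' = x := funext fun i => hx' i (by simp)
        rwa [hxx] at hsol
  | cons j js ih =>
      obtain ⟨L', hz, hpres, hiff⟩ := ih (elim j L)
      refine ⟨L', ?_, ?_, ?_⟩
      · intro c hc j' hj'
        rcases List.mem_cons.1 hj' with rfl | hj'
        · exact hpres j' (elim_coeff_zero j' L) c hc
        · exact hz c hc j' hj'
      · intro j' hL
        exact hpres j' (elim_zero_preserve j L j' hL)
      · intro x
        rw [hiff]
        constructor
        · rintro ⟨x', hagree, hsol⟩
          rw [elim_sound] at hsol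
          obtain ⟨t, hsol⟩ := hsol
          refine ⟨Function.update x' j t, fun i hi => ?_, hsol⟩
          have hij : i ≠ j := fun h => hi (h ▸ List.mem_cons_self)
          rw [Function.update_of_ne hij]
          exact hagree i (fun h => hi (List.mem_cons_of_mem _ h))
        · rintro ⟨x'', hagree, hsol⟩
          refine ⟨Function.update x'' j (x j), fun i hi => ?_, ?_⟩
          · by_cases hij : i = j
            · subst hij; rw [Function.update_self]
            · rw [Function.update_of_ne hij]
              exact hagree i (by simp [hij, hi])
          · rw [elim_sound]
            exact ⟨x'' j, by rw [Function.update_idem, Function.update_eq_self]; exact hsol⟩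

end FMelim

theorem exists_rep : ∃ (a br : ℕ) (E : Fin a → (Fin m → ℕ)) (R : Fin br → (Fin m → ℕ)),
    (∀ i, inY p b (E i)) ∧ (∀ i, inY0 p (R i)) ∧
    ∀ y, inY p b y → ∃ (i : Fin a) (c : Fin br → ℕ), y = E i + ∑ r, c r • R r := by
  obtain ⟨br, R, hR, hgen⟩ := exists_gens p
  obtain ⟨B, hBS, hBcov⟩ := exists_fin_basis {y : Fin m → ℕ | inY p b y}
  refine ⟨B.card, br, fun i => B.equivFin.symm i, R,
    fun i => hBS (B.equivFin.symm i).2, hR, fun y hy => ?_⟩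
  obtain ⟨e, heB, hele⟩ := hBcov y hy
  obtain ⟨c, hc⟩ := hgen (y - e) (hy.sub p b (hBS heB) hele)
  refine ⟨B.equivFin ⟨e, heB⟩, c, ?_⟩
  have h1 : ((B.equivFin.symm (B.equivFin ⟨e, heB⟩)) : Fin m → ℕ) = e := by simp
  show y = ↑(B.equivFin.symm (B.equivFin ⟨e, heB⟩)) + ∑ r, c r • R r
  rw [h1, ← hc]
  funext j
  show y j = e j + (y j - e j)
  exact (Nat.add_sub_cancel' (hele j)).symm


section Assemble
variable {m a br : ℕ} (E : Fin a → (Fin m → ℕ)) (R : Fin br → (Fin m → ℕ))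

abbrev Idx (m a br : ℕ) := Fin m ⊕ (Fin a ⊕ Fin br)

def row (j : Fin m) : Idx m a br → ℚ :=
  Sum.elim (fun j' => if j' = j then 1 else 0)
    (Sum.elim (fun e => -(E e j : ℚ)) (fun r => -(R r j : ℚ)))

def nrow (j : Fin m) : Idx m a br → ℚ := fun i => -(row E R j i)

def ind (k : Idx m a br) : Idx m a br → ℚ := fun i => if i = k then -1 else 0

def csum : Idx m a br → ℚ := Sum.elim (fun _ => 0) (Sum.elim (fun _ => 1) (fun _ => 0))

def ncsum : Idx m a br → ℚ := fun i => -(csum i)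

def L0 : List ((Idx m a br → ℚ) × ℚ) :=
  ((List.finRange m).flatMap fun j => [(row E R j, 0), (nrow E R j, 0)]) ++
  ((List.finRange a).map fun e => (ind (Sum.inr (Sum.inl e)), 0)) ++
  ((List.finRange br).map fun r => (ind (Sum.inr (Sum.inr r)), 0)) ++
  [(csum, 1), (ncsum, -1)]

lemma eval_sum (c1 : Idx m a br → ℚ) (w : Idx m a br → ℝ) :
    ∑ i, (c1 i : ℝ) * w i
      = (∑ j, (c1 (Sum.inl j) : ℝ) * w (Sum.inl j))
        + ((∑ e, (c1 (Sum.inr (Sum.inl e)) : ℝ) * w (Sum.inr (Sum.inl e)))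
        + ∑ r, (c1 (Sum.inr (Sum.inr r)) : ℝ) * w (Sum.inr (Sum.inr r))) := by
  rw [Fintype.sum_sum_type, Fintype.sum_sum_type]

variable (y : Fin m → ℝ) (lam : Fin a → ℝ) (mu : Fin br → ℝ)

lemma hrow_eval (j : Fin m) :
    (∑ i, ((row E R j) i : ℝ) * (Sum.elim y (Sum.elim lam mu)) i)
      = y j - (∑ e, (E e j : ℝ) * lam e) - ∑ r, (R r j : ℝ) * mu r := by
  set w : Idx m a br → ℝ := Sum.elim y (Sum.elim lam mu) with hw
  rw [eval_sum]
  have h1 : (∑ j', ((row E R j (Sum.inl j') : ℚ) : ℝ) * w (Sum.inl j')) = y j := by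
    have h : ∀ j', ((row E R j (Sum.inl j') : ℚ) : ℝ) * w (Sum.inl j')
        = if j' = j then y j' else 0 := by
      intro j'; simp only [row, Sum.elim_inl, hw]
      split_ifs <;> simp
    rw [Finset.sum_congr rfl fun j' _ => h j']
    simp [Finset.sum_ite_eq' Finset.univ j]
  have h2 : (∑ e, ((row E R j (Sum.inr (Sum.inl e)) : ℚ) : ℝ) * w (Sum.inr (Sum.inl e)))
      = -∑ e, (E e j : ℝ) * lam e := by
    rw [← Finset.sum_neg_distrib]
    refine Finset.sum_congr rfl fun e _ => ?_
    simp only [row, Sum.elim_inr, Sum.elim_inl, hw]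
    push_cast; ring
  have h3 : (∑ r, ((row E R j (Sum.inr (Sum.inr r)) : ℚ) : ℝ) * w (Sum.inr (Sum.inr r)))
      = -∑ r, (R r j : ℝ) * mu r := by
    rw [← Finset.sum_neg_distrib]
    refine Finset.sum_congr rfl fun r _ => ?_
    simp only [row, Sum.elim_inr, hw]
    push_cast; ring
  rw [h1, h2, h3]; ring

lemma hnrow_eval (j : Fin m) :
    (∑ i, ((nrow E R j) i : ℝ) * (Sum.elim y (Sum.elim lam mu)) i)
      = -(y j - (∑ e, (E e j : ℝ) * lam e) - ∑ r, (R r j : ℝ) * mu r) := by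
  rw [← hrow_eval E R y lam mu j, ← Finset.sum_neg_distrib]
  refine Finset.sum_congr rfl fun i _ => ?_
  simp only [nrow]
  push_cast; ring

lemma ind_eval (k : Idx m a br) (w : Idx m a br → ℝ) :
    (∑ i, ((ind k) i : ℝ) * w i) = -w k := by
  have h : ∀ i, ((ind k i : ℚ) : ℝ) * w i = if i = k then -w i else 0 := by
    intro i; simp only [ind]; split_ifs <;> simp
  rw [Finset.sum_congr rfl fun i _ => h i]
  simp [Finset.sum_ite_eq' Finset.univ k]

lemma csum_eval :
    (∑ i, ((csum : Idx m a br → ℚ) i : ℝ) * (Sum.elim y (Sum.elim lam mu)) i)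
      = ∑ e, lam e := by
  rw [eval_sum]
  simp [csum]

lemma ncsum_eval :
    (∑ i, ((ncsum : Idx m a br → ℚ) i : ℝ) * (Sum.elim y (Sum.elim lam mu)) i)
      = -∑ e, lam e := by
  have h : ∀ i, (((ncsum : Idx m a br → ℚ) i : ℚ) : ℝ) * (Sum.elim y (Sum.elim lam mu)) i
      = -(((csum : Idx m a br → ℚ) i : ℝ) * (Sum.elim y (Sum.elim lam mu)) i) := by
    intro i; simp only [ncsum]; push_cast; ring
  rw [Finset.sum_congr rfl fun i _ => h i, Finset.sum_neg_distrib, csum_eval]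

lemma sol_L0 :
    Sum.elim y (Sum.elim lam mu) ∈ lSol (L0 E R) ↔
      ((∀ e, 0 ≤ lam e) ∧ (∑ e, lam e = 1) ∧ (∀ r, 0 ≤ mu r) ∧
        y = (∑ i, lam i • cv (E i)) + ∑ i, mu i • cv (R i)) := by
  set w : Idx m a br → ℝ := Sum.elim y (Sum.elim lam mu) with hw
  have hyeq : ∀ j, ((y = (∑ i, lam i • cv (E i)) + ∑ i, mu i • cv (R i)) →
      y j = (∑ e, (E e j : ℝ) * lam e) + ∑ r, (R r j : ℝ) * mu r) := by
    intro j hD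
    rw [hD]
    simp only [Pi.add_apply, Finset.sum_apply, Pi.smul_apply, smul_eq_mul, cv]
    congr 1
    · exact Finset.sum_congr rfl fun e _ => by ring
    · exact Finset.sum_congr rfl fun r _ => by ring
  constructor
  · intro hx
    have hmem : ∀ c ∈ L0 E R, lSat c w := hx
    have hA : ∀ e : Fin a, 0 ≤ lam e := by
      intro e
      have := hmem _ (by
        rw [L0]
        simp only [List.mem_append, List.mem_map, List.mem_finRange]
        exact Or.inl (Or.inl (Or.inr ⟨e, trivial, rfl⟩)))
      rw [lSat] at this
      rw [ind_eval] at this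
      simpa [hw] using this
    have hB : ∀ r : Fin br, 0 ≤ mu r := by
      intro r
      have := hmem _ (by
        rw [L0]
        simp only [List.mem_append, List.mem_map, List.mem_finRange]
        exact Or.inl (Or.inr ⟨r, trivial, rfl⟩))
      rw [lSat] at this
      rw [ind_eval] at this
      simpa [hw] using this
    have hC : ∑ e, lam e = 1 := by
      have l1 := hmem _ (by
        rw [L0]
        simp only [List.mem_append, List.mem_cons]
        exact Or.inr (Or.inl rfl))
      have l2 := hmem _ (by
        rw [L0]
        simp only [List.mem_append, List.mem_cons]
        exact Or.inr (Or.inr (Or.inl rfl)))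
      rw [lSat, csum_eval] at l1
      rw [lSat, ncsum_eval] at l2
      push_cast at l1 l2
      linarith
    have hD : y = (∑ i, lam i • cv (E i)) + ∑ i, mu i • cv (R i) := by
      funext j
      have l1 := hmem _ (by
        rw [L0]
        simp only [List.mem_append, List.mem_flatMap, List.mem_cons, List.mem_finRange]
        exact Or.inl (Or.inl (Or.inl ⟨j, trivial, Or.inl rfl⟩)))
      have l2 := hmem _ (by
        rw [L0]
        simp only [List.mem_append, List.mem_flatMap, List.mem_cons, List.mem_finRange]
        exact Or.inl (Or.inl (Or.inl ⟨j, trivial, Or.inr (Or.inl rfl)⟩)))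
      rw [lSat, hrow_eval] at l1
      rw [lSat, hnrow_eval] at l2
      push_cast at l1 l2
      have hj : y j = (∑ e, (E e j : ℝ) * lam e) + ∑ r, (R r j : ℝ) * mu r := by linarith
      rw [hj]
      simp only [Pi.add_apply, Finset.sum_apply, Pi.smul_apply, smul_eq_mul, cv]
      congr 1
      · exact Finset.sum_congr rfl fun e _ => by ring
      · exact Finset.sum_congr rfl fun r _ => by ring
    exact ⟨hA, hC, hB, hD⟩
  · rintro ⟨hA, hC, hB, hD⟩
    intro c hc
    rw [L0] at hc
    simp only [List.mem_append, List.mem_flatMap, List.mem_map, List.mem_cons,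
      List.mem_finRange, List.not_mem_nil, or_false] at hc
    rcases hc with (((⟨j, _, (rfl | rfl)⟩) | ⟨e, _, rfl⟩) | ⟨r, _, rfl⟩) | (rfl | rfl)
    · rw [lSat, hrow_eval]
      have := hyeq j hD; push_cast; linarith
    · rw [lSat, hnrow_eval]
      have := hyeq j hD; push_cast; linarith
    · rw [lSat, ind_eval]
      have := hA e; simp only [hw, Sum.elim_inr, Sum.elim_inl]; push_cast; linarith
    · rw [lSat, ind_eval]
      have := hB r; simp only [hw, Sum.elim_inr]; push_cast; linarith
    · rw [lSat, csum_eval]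
      push_cast; linarith
    · rw [lSat, ncsum_eval]
      push_cast; linarith

end Assemble
-- main assembly
theorem main : ∃ (k : ℕ) (Θ : Fin k → Fin m → ℚ) (d : Fin k → ℝ),
    convexHull ℝ (Yr p b) = {y : Fin m → ℝ | ∀ i, (∑ j, (Θ i j : ℝ) * y j) ≤ d i} := by
  obtain ⟨a, br, E, R, hE, hR, hrep⟩ := exists_rep p b
  rw [conv_eq p b E R hE hR hrep]
  set js : List (Idx m a br) := ((List.finRange a).map (Sum.inr ∘ Sum.inl)) ++
    ((List.finRange br).map (Sum.inr ∘ Sum.inr)) with hjs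
  obtain ⟨L', hz, hpres, hiff⟩ := elimList js (L0 E R)
  have hinl_notmem : ∀ j : Fin m, (Sum.inl j : Idx m a br) ∉ js := by
    intro j hmem
    rw [hjs] at hmem
    simp only [List.mem_append, List.mem_map, List.mem_finRange, Function.comp] at hmem
    rcases hmem with ⟨e, _, h⟩ | ⟨r, _, h⟩ <;> exact Sum.inr_ne_inl h
  have hinr1_mem : ∀ e : Fin a, (Sum.inr (Sum.inl e) : Idx m a br) ∈ js := by
    intro e
    rw [hjs]
    simp [Function.comp]
  have hinr2_mem : ∀ r : Fin br, (Sum.inr (Sum.inr r) : Idx m a br) ∈ js := by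
    intro r
    rw [hjs]
    simp [Function.comp]
  refine ⟨L'.length, fun i j => (L'.get i).1 (Sum.inl j), fun i => (((L'.get i).2 : ℚ) : ℝ), ?_⟩
  ext y
  have keyeval : ∀ c : (Idx m a br → ℚ) × ℚ,
      (∑ i, (c.1 i : ℝ) * (Sum.elim y (0 : Fin a ⊕ Fin br → ℝ)) i)
        = ∑ j, (c.1 (Sum.inl j) : ℝ) * y j := by
    intro c
    rw [eval_sum]
    simp
  constructor
  · rintro ⟨lam, mu, h1, h2, h3, h4⟩
    have hsol : Sum.elim y (Sum.elim lam mu) ∈ lSol (L0 E R) :=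
      (sol_L0 E R y lam mu).2 ⟨h1, h2, h3, h4⟩
    have hmemL' : Sum.elim y (0 : Fin a ⊕ Fin br → ℝ) ∈ lSol L' := by
      rw [hiff]
      refine ⟨Sum.elim y (Sum.elim lam mu), ?_, hsol⟩
      intro i hi
      cases i with
      | inl j => rfl
      | inr k =>
          exfalso
          cases k with
          | inl e => exact hi (hinr1_mem e)
          | inr r => exact hi (hinr2_mem r)
    intro i
    have := hmemL' (L'.get i) (L'.get_mem i)
    rw [lSat, keyeval] at this
    exact this
  · intro hy
    have hmemL' : Sum.elim y (0 : Fin a ⊕ Fin br → ℝ) ∈ lSol L' := by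
      intro c hc
      obtain ⟨i, rfl⟩ := List.mem_iff_get.1 hc
      rw [lSat, keyeval]
      exact hy i
    rw [hiff] at hmemL'
    obtain ⟨x', hagree, hx'sol⟩ := hmemL'
    set lam : Fin a → ℝ := fun e => x' (Sum.inr (Sum.inl e)) with hlam
    set mu : Fin br → ℝ := fun r => x' (Sum.inr (Sum.inr r)) with hmu
    have hx' : x' = Sum.elim y (Sum.elim lam mu) := by
      funext i
      cases i with
      | inl j => exact hagree _ (hinl_notmem j)
      | inr k => cases k with
        | inl e => rfl
        | inr r => rfl
    rw [hx'] at hx'sol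
    obtain ⟨h1, h2, h3, h4⟩ := (sol_L0 E R y lam mu).1 hx'sol
    exact ⟨lam, mu, h1, h2, h3, h4⟩

end FM10

/-- For a finite set `P = {p 0, …, p (m-1)} ⊆ ℝ^n` and `b ∈ ℝ^n`, the convex
hull of `{y ∈ ℤ^P₊ : ∑ p, p·y(p) ∈ b + ℤ^n}` is a rational polyhedron: it is
definable by finitely many linear inequalities with rational normal vectors. -/
theorem stmt10 (n m : ℕ) (p : Fin m → Fin n → ℝ) (b : Fin n → ℝ) :
    ∃ (k : ℕ) (Θ : Fin k → Fin m → ℚ) (d : Fin k → ℝ),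
      convexHull ℝ {y : Fin m → ℝ | ∃ yi : Fin m → ℕ,
          y = (fun j => (yi j : ℝ)) ∧
          ∃ z : Fin n → ℤ, (∑ j, (yi j : ℝ) • p j) = b + fun i => (z i : ℝ)} =
      {y : Fin m → ℝ | ∀ i, (∑ j, (Θ i j : ℝ) * y j) ≤ d i} := by
  obtain ⟨k, Θ, d, h⟩ := FM10.main p b
  exact ⟨k, Θ, d, h⟩
end

section
/- Fix a finite set P ⊆ R^n and b ∈ R^n, and let C^P := conv{y ∈ Z^P_+ : Σ_{p∈P} p·y(p) ∈ b + Z^n}. Then every extreme ray of the polyhedron C^P is spanned by some d ∈ Z^P_+ with Σ_{p∈P} p·d(p) ∈ Z^n. -/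
set_option linter.unusedSectionVars false
set_option linter.unusedVariables false
set_option maxHeartbeats 1000000

open Finset Filter Pointwise

section ConeLib

open Finset Filter

variable {E : Type*} [NormedAddCommGroup E] [NormedSpace ℝ E] [FiniteDimensional ℝ E]
  [DecidableEq E]

/-- The convex cone generated by a finite set of vectors. -/
def coneOf (B : Finset E) : Set E :=
  {x | ∃ lam : E → ℝ, (∀ v ∈ B, 0 ≤ lam v) ∧ x = ∑ v ∈ B, lam v • v}

lemma coneOf_zero (B : Finset E) : (0 : E) ∈ coneOf B :=
  ⟨0, fun v _ => le_refl 0, by simp⟩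

lemma coneOf_add {B : Finset E} {x y : E} (hx : x ∈ coneOf B) (hy : y ∈ coneOf B) :
    x + y ∈ coneOf B := by
  obtain ⟨l, hl, rfl⟩ := hx; obtain ⟨l', hl', rfl⟩ := hy
  refine ⟨l + l', fun v hv => add_nonneg (hl v hv) (hl' v hv), ?_⟩
  rw [← Finset.sum_add_distrib]
  exact Finset.sum_congr rfl fun v _ => by simp [add_smul]

lemma coneOf_smul {B : Finset E} {x : E} {t : ℝ} (ht : 0 ≤ t) (hx : x ∈ coneOf B) :
    t • x ∈ coneOf B := by
  obtain ⟨l, hl, rfl⟩ := hx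
  refine ⟨fun v => t * l v, fun v hv => mul_nonneg ht (hl v hv), ?_⟩
  rw [Finset.smul_sum]
  exact Finset.sum_congr rfl fun v _ => (mul_smul t (l v) v).symm

lemma mem_coneOf_self {B : Finset E} {v : E} (hv : v ∈ B) : v ∈ coneOf B := by
  classical
  refine ⟨fun w => if w = v then 1 else 0, fun w _ => by dsimp only; split <;> norm_num, ?_⟩
  rw [Finset.sum_congr rfl (fun w _ => show (if w = v then (1:ℝ) else 0) • w
    = if w = v then w else 0 by split <;> simp_all)]
  rw [Finset.sum_ite_eq' B v (fun w => w), if_pos hv]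

lemma coneOf_mono {B B' : Finset E} (h : B ⊆ B') : coneOf B ⊆ coneOf B' := by
  classical
  rintro x ⟨l, hl, rfl⟩
  refine ⟨fun v => if v ∈ B then l v else 0,
    fun v _ => by dsimp only; split <;> simp_all, ?_⟩
  rw [← Finset.sum_subset h (fun v _ hv => by simp [hv])]
  exact Finset.sum_congr rfl fun v hv => by simp [hv]

lemma coneOf_convex (B : Finset E) : Convex ℝ (coneOf B) :=
  fun x hx y hy a b ha hb _ => coneOf_add (coneOf_smul ha hx) (coneOf_smul hb hy)

/-- Reduction step: if the elements of `B` admit a nontrivial relation with a positive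
coefficient, any element of `coneOf B` lies in the cone of a proper subset. -/
lemma coneOf_reduce {B : Finset E} (μ : E → ℝ) (hrel : ∑ v ∈ B, μ v • v = 0)
    {b₀ : E} (hb₀ : b₀ ∈ B) (hpos : 0 < μ b₀) {x : E} (hx : x ∈ coneOf B) :
    ∃ b ∈ B, x ∈ coneOf (B.erase b) := by
  classical
  obtain ⟨l, hl, rfl⟩ := hx
  set P : Finset E := B.filter (fun v => 0 < μ v) with hP
  have hPne : P.Nonempty := ⟨b₀, Finset.mem_filter.2 ⟨hb₀, hpos⟩⟩
  obtain ⟨b, hbP, hbval⟩ := Finset.exists_mem_eq_inf' hPne (fun v => l v / μ v)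
  have hbB : b ∈ B := (Finset.mem_filter.1 hbP).1
  have hμb : 0 < μ b := (Finset.mem_filter.1 hbP).2
  set t : ℝ := l b / μ b with ht
  have htnn : 0 ≤ t := div_nonneg (hl b hbB) hμb.le
  have hkey : ∀ v ∈ B, 0 ≤ l v - t * μ v := by
    intro v hv
    by_cases hμv : 0 < μ v
    · have hvP : v ∈ P := Finset.mem_filter.2 ⟨hv, hμv⟩
      have h1 : t ≤ l v / μ v := hbval ▸ Finset.inf'_le _ hvP
      have h2 : t * μ v ≤ l v := (le_div_iff₀ hμv).1 h1
      linarith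
    · nlinarith [hl v hv, mul_nonneg htnn (neg_nonneg.2 (le_of_not_gt hμv))]
  refine ⟨b, hbB, fun v => l v - t * μ v, fun v hv => hkey v (Finset.mem_of_mem_erase hv), ?_⟩
  have hsum : ∑ v ∈ B, l v • v = ∑ v ∈ B, (l v - t * μ v) • v := by
    have : ∑ v ∈ B, (l v - t * μ v) • v = ∑ v ∈ B, l v • v - t • ∑ v ∈ B, μ v • v := by
      rw [Finset.smul_sum, ← Finset.sum_sub_distrib]
      exact Finset.sum_congr rfl fun v _ => by
        simp [sub_smul, mul_smul]
    rw [this, hrel, smul_zero, sub_zero]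
  rw [hsum, ← Finset.add_sum_erase _ _ hbB]
  have : l b - t * μ b = 0 := by rw [ht, div_mul_cancel₀ _ hμb.ne', sub_self]
  rw [this, zero_smul, zero_add]

/-- Conic Carathéodory: every element of a finitely generated cone lies in the cone on a
linearly independent subset of the generators. -/
lemma coneOf_caratheodory (B : Finset E) :
    ∀ x ∈ coneOf B, ∃ B' ⊆ B,
      LinearIndependent ℝ (fun b : ↥B' => (b : E)) ∧ x ∈ coneOf B' := by
  classical
  induction B using Finset.strongInduction with
  | _ B ih =>
    intro x hx
    by_cases hli : LinearIndependent ℝ (fun b : ↥B => (b : E))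
    · exact ⟨B, Finset.Subset.refl B, hli, hx⟩
    · obtain ⟨g, hg0, i₀, hi₀⟩ := Fintype.not_linearIndependent_iff.1 hli
      set μ : E → ℝ := fun v => if h : v ∈ B then g ⟨v, h⟩ else 0 with hμ
      have hrel : ∑ v ∈ B, μ v • v = 0 := by
        rw [← hg0, ← Finset.sum_attach B (fun v => μ v • v)]
        exact Finset.sum_congr rfl fun i _ => by simp [hμ, i.2]
      have hex : ∃ b ∈ B, x ∈ coneOf (B.erase b) := by
        rcases hi₀.lt_or_gt with h | h
        · have hrel' : ∑ v ∈ B, (-μ) v • v = 0 := by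
            rw [← neg_eq_zero, ← hrel, ← Finset.sum_neg_distrib]
            exact Finset.sum_congr rfl fun v _ => by simp
          refine coneOf_reduce (-μ) hrel' i₀.2 ?_ hx
          have heq : ((-μ) (i₀ : E)) = -(g i₀) := by simp [hμ, dif_pos i₀.2]
          rw [heq]; exact neg_pos.2 h
        · refine coneOf_reduce μ hrel i₀.2 ?_ hx
          simpa only [hμ, dif_pos i₀.2] using h
      obtain ⟨b, hbB, hxe⟩ := hex
      obtain ⟨B', hB'sub, hB'li, hxB'⟩ := ih (B.erase b) (Finset.erase_ssubset hbB) x hxe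
      exact ⟨B', hB'sub.trans (Finset.erase_subset b B), hB'li, hxB'⟩

lemma coneOf_isClosed_of_linearIndependent {B : Finset E}
    (h : LinearIndependent ℝ (fun b : ↥B => (b : E))) : IsClosed (coneOf B) := by
  classical
  let T : (↥B → ℝ) →ₗ[ℝ] E :=
    { toFun := fun lam => ∑ b : ↥B, lam b • (b : E)
      map_add' := fun f g => by
        rw [← Finset.sum_add_distrib]
        exact Finset.sum_congr rfl fun b _ => add_smul _ _ _
      map_smul' := fun c f => by
        rw [RingHom.id_apply, Finset.smul_sum]
        exact Finset.sum_congr rfl fun b _ => (mul_smul c (f b) _) }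
  have hker : LinearMap.ker T = ⊥ := by
    rw [LinearMap.ker_eq_bot']
    intro g hg
    have hg' : ∑ b : ↥B, g b • (b : E) = 0 := hg
    ext b
    exact Fintype.linearIndependent_iff.1 h g hg' b
  have hemb := T.isClosedEmbedding_of_injective hker
  have horth : IsClosed {lam : ↥B → ℝ | ∀ b, 0 ≤ lam b} := by
    have : {lam : ↥B → ℝ | ∀ b, 0 ≤ lam b} = ⋂ b, {lam | 0 ≤ lam b} := by
      ext; simp [Set.mem_iInter]
    rw [this]
    exact isClosed_iInter fun b => isClosed_le continuous_const (continuous_apply b)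
  have himg : coneOf B = T '' {lam : ↥B → ℝ | ∀ b, 0 ≤ lam b} := by
    ext x
    constructor
    · rintro ⟨l, hl, rfl⟩
      refine ⟨fun b => l (b : E), fun b => hl (b : E) b.2, ?_⟩
      show ∑ b : ↥B, l (b : E) • (b : E) = _
      rw [Finset.univ_eq_attach, Finset.sum_attach B (fun v => l v • v)]
    · rintro ⟨lam, hlam, rfl⟩
      refine ⟨fun v => if h : v ∈ B then lam ⟨v, h⟩ else 0,
        fun v hv => by simp only [dif_pos hv]; exact hlam ⟨v, hv⟩, ?_⟩
      show ∑ b : ↥B, lam b • (b : E) = _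
      rw [Finset.univ_eq_attach,
        ← Finset.sum_attach B (fun v => (if h : v ∈ B then lam ⟨v, h⟩ else 0) • v)]
      exact Finset.sum_congr rfl fun b _ => by rw [dif_pos b.2]
  rw [himg]
  exact hemb.isClosedMap _ horth

lemma coneOf_isClosed (B : Finset E) : IsClosed (coneOf B) := by
  classical
  have hrepr : coneOf B = ⋃ B' ∈ B.powerset.filter
      (fun B' : Finset E => LinearIndependent ℝ (fun b : ↥B' => (b : E))), coneOf B' := by
    ext x
    constructor
    · intro hx
      obtain ⟨B', hB'B, hli, hxB'⟩ := coneOf_caratheodory B x hx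
      exact Set.mem_biUnion (Finset.mem_filter.2 ⟨Finset.mem_powerset.2 hB'B, hli⟩) hxB'
    · intro hx
      obtain ⟨B', hB', hxB'⟩ := Set.mem_iUnion₂.1 hx
      exact coneOf_mono (Finset.mem_powerset.1 (Finset.mem_filter.1 hB').1) hxB'
  rw [hrepr]
  exact isClosed_biUnion_finset fun B' hB' =>
    coneOf_isClosed_of_linearIndependent (Finset.mem_filter.1 hB').2
end ConeLib

/-- Every element of a set of ℕ-vectors has a minimal element of the set below it. -/
lemma exists_minimal_le {m : ℕ} {s : Set (Fin m → ℕ)} :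
    ∀ (N : ℕ) (y : Fin m → ℕ), y ∈ s → (∑ j, y j) ≤ N →
      ∃ f ∈ s, f ≤ y ∧ ∀ w ∈ s, w ≤ f → w = f := by
  intro N
  induction N with
  | zero =>
    intro y hy hN
    refine ⟨y, hy, le_refl _, fun w hw hwy => ?_⟩
    have hy0 : ∀ j, y j = 0 := by
      intro j
      exact Finset.sum_eq_zero_iff.1 (Nat.le_zero.1 hN) j (Finset.mem_univ j)
    funext j
    have h1 : w j ≤ y j := hwy j
    have h2 := hy0 j
    omega
  | succ N ih =>
    intro y hy hN
    by_cases hmin : ∀ w ∈ s, w ≤ y → w = y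
    · exact ⟨y, hy, le_refl _, hmin⟩
    · push_neg at hmin
      obtain ⟨w, hw, hwy, hne⟩ := hmin
      have hlt : ∑ j, w j < ∑ j, y j := by
        obtain ⟨j₀, hj₀⟩ : ∃ j, w j ≠ y j := by
          by_contra hc; push_neg at hc; exact hne (funext hc)
        exact Finset.sum_lt_sum (fun j _ => hwy j)
          ⟨j₀, Finset.mem_univ j₀, lt_of_le_of_ne (hwy j₀) hj₀⟩
      obtain ⟨f, hf, hfw, hmin'⟩ := ih w hw (by omega)
      exact ⟨f, hf, le_trans hfw hwy, hmin'⟩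

/-- Dickson's lemma: the set of minimal elements of any set of ℕ-vectors is finite. -/
lemma minimals_finite {m : ℕ} (s : Set (Fin m → ℕ)) :
    {f | f ∈ s ∧ ∀ w ∈ s, w ≤ f → w = f}.Finite := by
  by_contra hinf
  have e := Set.Infinite.natEmbedding _ hinf
  have inst : ∀ i : Fin m, IsWellOrder ((fun _ : Fin m => ℕ) i) (· < ·) := by
    intro i
    exact inferInstanceAs (IsWellOrder ℕ (· < ·))
  have hpwo : Set.IsPWO {f | f ∈ s ∧ ∀ w ∈ s, w ≤ f → w = f} :=
    Set.isPWO_of_wellQuasiOrderedLE _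
  obtain ⟨i, j, hij, hle⟩ := hpwo (fun k => ⟨(e k : Fin m → ℕ), (e k).2⟩)
  have heq : ((e i : Fin m → ℕ)) = (e j : Fin m → ℕ) :=
    (e j).2.2 (e i : Fin m → ℕ) (e i).2.1 hle
  have : i = j := e.injective (Subtype.ext heq)
  omega

/-- For finite `P ⊆ ℝ^n` and `b ∈ ℝ^n`, let
`C^P = conv{y ∈ ℤ^P₊ : ∑ p, p·y(p) ∈ b + ℤ^n}`. Every extreme ray of `C^P`
(a nonzero direction `d` of the recession cone such that any decomposition
`d = d₁ + d₂` within the recession cone has `d₁` a nonnegative multiple of `d`)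
is spanned by some `c ∈ ℤ^P₊` with `∑ p, p·c(p) ∈ ℤ^n`. -/
theorem stmt11 (n m : ℕ) (p : Fin m → Fin n → ℝ) (b : Fin n → ℝ)
    (C : Set (Fin m → ℝ))
    (hC : C = convexHull ℝ {y : Fin m → ℝ | ∃ yi : Fin m → ℕ,
        y = (fun j => (yi j : ℝ)) ∧
        ∃ z : Fin n → ℤ, (∑ j, (yi j : ℝ) • p j) = b + fun i => (z i : ℝ)})
    (K : Set (Fin m → ℝ))
    (hK : K = {v : Fin m → ℝ | ∀ x ∈ C, ∀ t : ℝ, 0 ≤ t → x + t • v ∈ C})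
    (d : Fin m → ℝ) (hdK : d ∈ K) (hd0 : d ≠ 0)
    (hext : ∀ d₁ ∈ K, ∀ d₂ ∈ K, d = d₁ + d₂ → ∃ t : ℝ, 0 ≤ t ∧ d₁ = t • d) :
    ∃ (c : Fin m → ℕ) (t : ℝ), 0 < t ∧ d = t • (fun j => (c j : ℝ)) ∧
      ∃ z : Fin n → ℤ, (∑ j, (c j : ℝ) • p j) = fun i => (z i : ℝ) := by
  classical
  subst hC hK
  -- notation
  set cv : (Fin m → ℕ) → (Fin m → ℝ) := fun v j => (v j : ℝ) with hcv
  set Sn : Set (Fin m → ℕ) :=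
    {y | ∃ z : Fin n → ℤ, (∑ j, (y j : ℝ) • p j) = b + fun i => (z i : ℝ)} with hSn
  set Rn : Set (Fin m → ℕ) :=
    {c | ∃ z : Fin n → ℤ, (∑ j, (c j : ℝ) • p j) = fun i => (z i : ℝ)} with hRn
  have hgen : {y : Fin m → ℝ | ∃ yi : Fin m → ℕ, y = (fun j => (yi j : ℝ)) ∧
      ∃ z : Fin n → ℤ, (∑ j, (yi j : ℝ) • p j) = b + fun i => (z i : ℝ)}
      = cv '' Sn := by
    ext y
    constructor
    · rintro ⟨yi, rfl, hz⟩; exact ⟨yi, hz, rfl⟩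
    · rintro ⟨yi, hz, rfl⟩; exact ⟨yi, rfl, hz⟩
  rw [hgen] at hdK hext
  set C : Set (Fin m → ℝ) := convexHull ℝ (cv '' Sn) with hCdef
  set K : Set (Fin m → ℝ) := {v | ∀ x ∈ C, ∀ t : ℝ, 0 ≤ t → x + t • v ∈ C} with hKdef
  -- basic properties of K
  have hKmem : ∀ v : Fin m → ℝ, v ∈ K ↔ ∀ x ∈ C, ∀ t : ℝ, 0 ≤ t → x + t • v ∈ C :=
    fun v => Iff.rfl
  have hKsmul : ∀ (s : ℝ), 0 ≤ s → ∀ v ∈ K, s • v ∈ K := by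
    intro s hs v hv x hx t ht
    have := hv x hx (t * s) (mul_nonneg ht hs)
    rwa [← smul_smul] at this
  have hKadd : ∀ v ∈ K, ∀ w ∈ K, v + w ∈ K := by
    intro v hv w hw x hx t ht
    have h1 := hv x hx t ht
    have h2 := hw (x + t • v) h1 t ht
    rwa [smul_add, ← add_assoc]
  -- the degenerate case: no generators
  by_cases hSne : Sn.Nonempty
  swap
  · have hCempty : C = (∅ : Set (Fin m → ℝ)) := by
      rw [hCdef, Set.not_nonempty_iff_eq_empty.1 hSne]
      simp [convexHull_empty]
    have hvac : ∀ v : Fin m → ℝ, v ∈ K := by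
      intro v x hx t ht
      rw [hCempty] at hx
      exact absurd hx (Set.notMem_empty x)
    obtain ⟨t, ht0, hte⟩ := hext (-d) (hvac _) ((2 : ℝ) • d) (hvac _)
      (by rw [two_smul]; abel)
    have h1 : (t + 1) • d = 0 := by
      rw [add_smul, one_smul, ← hte]; abel
    rcases smul_eq_zero.1 h1 with h | h
    · linarith
    · exact absurd h hd0
  obtain ⟨y₀, hy₀⟩ := hSne
  have hconv : Convex ℝ C := convex_convexHull ℝ _
  -- arithmetic helper
  have hcvadd : ∀ (y c : Fin m → ℕ) (k : ℕ), cv (y + k • c) = cv y + (k : ℝ) • cv c := by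
    intro y c k
    funext j
    show (((y + k • c) j : ℕ) : ℝ) = (y j : ℝ) + (k : ℝ) * (c j : ℝ)
    push_cast [Pi.add_apply, Pi.smul_apply, smul_eq_mul]
    ring
  -- shifting generators by rays
  have hshift : ∀ y ∈ Sn, ∀ c ∈ Rn, ∀ k : ℕ, (y + k • c) ∈ Sn := by
    rintro y ⟨zy, hzy⟩ c ⟨zc, hzc⟩ k
    refine ⟨fun i => zy i + k * zc i, ?_⟩
    have hsplit : ∑ j, (((y + k • c) j : ℕ) : ℝ) • p j
        = (∑ j, (y j : ℝ) • p j) + (k : ℝ) • ∑ j, (c j : ℝ) • p j := by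
      rw [Finset.smul_sum, ← Finset.sum_add_distrib]
      refine Finset.sum_congr rfl fun j _ => ?_
      have : (((y + k • c) j : ℕ) : ℝ) = (y j : ℝ) + (k : ℝ) * (c j : ℝ) := by
        push_cast [Pi.add_apply, Pi.smul_apply, smul_eq_mul]; ring
      rw [this, add_smul, smul_smul]
    rw [hsplit, hzy, hzc]
    funext i
    show b i + (zy i : ℝ) + (k : ℝ) * (zc i : ℝ) = b i + ((zy i + k * zc i : ℤ) : ℝ)
    push_cast
    ring
  -- rays are recession directions
  have hRinK : ∀ c ∈ Rn, cv c ∈ K := by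
    intro c hc
    set C' : Set (Fin m → ℝ) := {x | ∀ t : ℝ, 0 ≤ t → x + t • cv c ∈ C} with hC'
    have hC'conv : Convex ℝ C' := by
      intro x hx y hy a a' ha ha' haa t ht
      have hmem := hconv (hx t ht) (hy t ht) ha ha' haa
      have hrw : a • (x + t • cv c) + a' • (y + t • cv c)
          = a • x + a' • y + (a + a') • (t • cv c) := by module
      rwa [hrw, haa, one_smul] at hmem
    have hSsub : cv '' Sn ⊆ C' := by
      rintro _ ⟨y, hy, rfl⟩ t ht
      set k : ℕ := ⌊t⌋₊ with hk
      have hk1 : (k : ℝ) ≤ t := Nat.floor_le ht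
      have hk2 : t < (k : ℝ) + 1 := Nat.lt_floor_add_one t
      set θ : ℝ := t - (k : ℝ) with hθ
      have hθ0 : 0 ≤ θ := by simp [hθ]; linarith
      have hθ1 : θ ≤ 1 := by simp [hθ]; linarith
      have p1 : cv (y + k • c) ∈ C :=
        subset_convexHull ℝ _ ⟨_, hshift y hy c hc k, rfl⟩
      have p2 : cv (y + (k + 1) • c) ∈ C :=
        subset_convexHull ℝ _ ⟨_, hshift y hy c hc (k + 1), rfl⟩
      have hcomb := hconv p1 p2 (by linarith : (0:ℝ) ≤ 1 - θ) hθ0 (by ring)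
      have hrw : (1 - θ) • cv (y + k • c) + θ • cv (y + (k + 1) • c)
          = cv y + t • cv c := by
        rw [hcvadd, hcvadd]
        push_cast
        have hteq : t = (k : ℝ) + θ := by rw [hθ]; ring
        rw [hteq]
        module
      rwa [hrw] at hcomb
    exact fun x hx t ht => (convexHull_min hSsub hC'conv) hx t ht
  -- minimal elements
  set Rn' : Set (Fin m → ℕ) := {c | c ∈ Rn ∧ c ≠ 0} with hRn'
  have hGfin : {f | f ∈ Rn' ∧ ∀ w ∈ Rn', w ≤ f → w = f}.Finite := minimals_finite Rn'
  have hFfin : {f | f ∈ Sn ∧ ∀ w ∈ Sn, w ≤ f → w = f}.Finite := minimals_finite Sn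
  set Gr : Finset (Fin m → ℝ) := hGfin.toFinset.image cv with hGr
  -- difference of ray data stays a ray
  have hdiff : ∀ y ∈ Sn, ∀ f ∈ Sn, f ≤ y → (y - f) ∈ Rn := by
    rintro y ⟨zy, hzy⟩ f ⟨zf, hzf⟩ hle
    refine ⟨fun i => zy i - zf i, ?_⟩
    have hsplit : ∑ j, (((y - f) j : ℕ) : ℝ) • p j
        = (∑ j, (y j : ℝ) • p j) - ∑ j, (f j : ℝ) • p j := by
      rw [← Finset.sum_sub_distrib]
      refine Finset.sum_congr rfl fun j _ => ?_
      have : (((y - f) j : ℕ) : ℝ) = (y j : ℝ) - (f j : ℝ) := by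
        have := hle j
        push_cast [Pi.sub_apply, Nat.cast_sub this]
        ring
      rw [this, sub_smul]
    rw [hsplit, hzy, hzf]
    funext i
    simp only [Pi.add_apply, Pi.sub_apply]
    push_cast
    ring
  have hdiffR : ∀ c ∈ Rn, ∀ g ∈ Rn, g ≤ c → (c - g) ∈ Rn := by
    rintro c ⟨zc, hzc⟩ g ⟨zg, hzg⟩ hle
    refine ⟨fun i => zc i - zg i, ?_⟩
    have hsplit : ∑ j, (((c - g) j : ℕ) : ℝ) • p j
        = (∑ j, (c j : ℝ) • p j) - ∑ j, (g j : ℝ) • p j := by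
      rw [← Finset.sum_sub_distrib]
      refine Finset.sum_congr rfl fun j _ => ?_
      have : (((c - g) j : ℕ) : ℝ) = (c j : ℝ) - (g j : ℝ) := by
        have := hle j
        push_cast [Pi.sub_apply, Nat.cast_sub this]
        ring
      rw [this, sub_smul]
    rw [hsplit, hzc, hzg]
    funext i
    simp only [Pi.add_apply, Pi.sub_apply]
    push_cast
    ring
  have hcvsub : ∀ (y f : Fin m → ℕ), f ≤ y → cv y = cv f + cv (y - f) := by
    intro y f hle
    funext j
    have := hle j
    show (y j : ℝ) = (f j : ℝ) + (((y - f) j : ℕ) : ℝ)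
    push_cast [Pi.sub_apply, Nat.cast_sub this]
    ring
  -- every ray is in the cone generated by the minimal rays
  have hsumpos : ∀ c : Fin m → ℕ, c ≠ 0 → 1 ≤ ∑ j, c j := by
    intro c hc
    by_contra h
    push_neg at h
    apply hc
    funext j
    have := Finset.sum_eq_zero_iff.1 (Nat.lt_one_iff.1 h) j (Finset.mem_univ j)
    simpa using this
  have hRcone : ∀ c ∈ Rn, cv c ∈ coneOf Gr := by
    have claim : ∀ N : ℕ, ∀ c ∈ Rn, (∑ j, c j) ≤ N → cv c ∈ coneOf Gr := by
      intro N
      induction N with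
      | zero =>
        intro c hc hN
        have hc0 : c = 0 := by
          funext j
          exact Finset.sum_eq_zero_iff.1 (Nat.le_zero.1 hN) j (Finset.mem_univ j)
        have : cv c = 0 := by
          funext j; rw [hc0]; simp [hcv]
        rw [this]
        exact coneOf_zero Gr
      | succ N ih =>
        intro c hc hN
        by_cases hc0 : c = 0
        · have : cv c = 0 := by funext j; rw [hc0]; simp [hcv]
          rw [this]; exact coneOf_zero Gr
        · have hc' : c ∈ Rn' := ⟨hc, hc0⟩
          obtain ⟨g, hg, hgle, hgmin⟩ :=
            exists_minimal_le (s := Rn') (∑ j, c j) c hc' le_rfl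
          have hgG : cv g ∈ Gr :=
            Finset.mem_image.2 ⟨g, hGfin.mem_toFinset.2 ⟨hg, hgmin⟩, rfl⟩
          have hcg : (c - g) ∈ Rn := hdiffR c hc g hg.1 hgle
          have hsum : ∑ j, (c - g) j + ∑ j, g j = ∑ j, c j := by
            rw [← Finset.sum_add_distrib]
            exact Finset.sum_congr rfl fun j _ => by
              have h : g j ≤ c j := hgle j
              show c j - g j + g j = c j
              omega
          have hgpos : 1 ≤ ∑ j, g j := hsumpos g hg.2
          have hless : ∑ j, (c - g) j ≤ N := by omega
          have hrec := ih (c - g) hcg hless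
          rw [hcvsub c g hgle]
          exact coneOf_add (mem_coneOf_self hgG) hrec
    exact fun c hc => claim (∑ j, c j) c hc le_rfl
  -- C is contained in a (closed) polyhedral-like set
  set FHull : Set (Fin m → ℝ) := convexHull ℝ (cv '' {f | f ∈ Sn ∧ ∀ w ∈ Sn, w ≤ f → w = f})
    with hFHull
  set D : Set (Fin m → ℝ) := FHull + coneOf Gr with hD
  have hSD : cv '' Sn ⊆ D := by
    rintro _ ⟨y, hy, rfl⟩
    obtain ⟨f, hf, hfle, hfmin⟩ := exists_minimal_le (s := Sn) (∑ j, y j) y hy le_rfl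
    have h1 : cv f ∈ FHull := subset_convexHull ℝ _ ⟨f, ⟨hf, hfmin⟩, rfl⟩
    have h2 : (y - f) ∈ Rn := hdiff y hy f hf hfle
    have h3 : cv (y - f) ∈ coneOf Gr := hRcone _ h2
    rw [hcvsub y f hfle]
    exact Set.add_mem_add h1 h3
  have hCD : C ⊆ D :=
    convexHull_min hSD ((convex_convexHull ℝ _).add (coneOf_convex Gr))
  -- the limit argument: d lies in the cone of minimal rays
  have hy₀C : cv y₀ ∈ C := subset_convexHull ℝ _ ⟨y₀, hy₀, rfl⟩
  have hmemD : ∀ k : ℕ, cv y₀ + (k : ℝ) • d ∈ D :=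
    fun k => hCD (hdK (cv y₀) hy₀C (k : ℝ) (by positivity))
  choose fk hfk ck hck heq using fun k => Set.mem_add.1 (hmemD k)
  set u : ℕ → (Fin m → ℝ) := fun k => (k : ℝ)⁻¹ • ck k with hu
  have hu_mem : ∀ k, u k ∈ coneOf Gr := fun k => coneOf_smul (by positivity) (hck k)
  have hu_eq : ∀ k : ℕ, 1 ≤ k → u k = d + (k : ℝ)⁻¹ • (cv y₀ - fk k) := by
    intro k hk
    have hkne : (k : ℝ) ≠ 0 := Nat.cast_ne_zero.2 (by omega)
    have hckval : ck k = cv y₀ + (k : ℝ) • d - fk k := by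
      rw [← heq k]; abel
    rw [hu]
    show (k : ℝ)⁻¹ • ck k = _
    rw [hckval, smul_sub, smul_add, smul_smul, inv_mul_cancel₀ hkne, one_smul]
    module
  have hbnd : Bornology.IsBounded FHull := ((hFfin.image cv).isCompact_convexHull ℝ).isBounded
  obtain ⟨Mr, hMr⟩ := hbnd.subset_closedBall 0
  have hlim : Tendsto u atTop (nhds d) := by
    have hnorm : ∀ k : ℕ, 1 ≤ k → ‖u k - d‖ ≤ (‖cv y₀‖ + Mr) * (k : ℝ)⁻¹ := by
      intro k hk
      rw [hu_eq k hk]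
      have h1 : ‖d + (k : ℝ)⁻¹ • (cv y₀ - fk k) - d‖ = (k : ℝ)⁻¹ * ‖cv y₀ - fk k‖ := by
        rw [add_sub_cancel_left, norm_smul]
        congr 1
        rw [Real.norm_eq_abs, abs_of_nonneg (by positivity)]
      rw [h1, mul_comm]
      have h2 : ‖cv y₀ - fk k‖ ≤ ‖cv y₀‖ + Mr := by
        have := hMr (hfk k)
        rw [Metric.mem_closedBall, dist_zero_right] at this
        calc ‖cv y₀ - fk k‖ ≤ ‖cv y₀‖ + ‖fk k‖ := norm_sub_le _ _
          _ ≤ ‖cv y₀‖ + Mr := by linarith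
      exact mul_le_mul_of_nonneg_right h2 (by positivity)
    have h0 : Tendsto (fun k : ℕ => (‖cv y₀‖ + Mr) * (k : ℝ)⁻¹) atTop (nhds 0) := by
      have := (tendsto_inv_atTop_nhds_zero_nat (𝕜 := ℝ)).const_mul (‖cv y₀‖ + Mr)
      simpa using this
    have hsub : Tendsto (fun k => u k - d) atTop (nhds 0) := by
      apply squeeze_zero_norm' _ h0
      filter_upwards [eventually_atTop.2 ⟨1, fun k hk => hnorm k hk⟩] with k hk using hk
    have := hsub.add (tendsto_const_nhds (x := d))
    simpa using this
  have hdcone : d ∈ coneOf Gr :=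
    (coneOf_isClosed Gr).mem_of_tendsto hlim (Filter.Eventually.of_forall hu_mem)
  -- extract the extreme generator
  obtain ⟨lam, hlam, hd⟩ := hdcone
  have hex : ∃ v ∈ Gr, lam v • v ≠ 0 := by
    by_contra h
    push_neg at h
    exact hd0 (by rw [hd]; exact Finset.sum_eq_zero h)
  obtain ⟨v₀, hv₀G, hv₀ne⟩ := hex
  obtain ⟨g₀, hg₀mem, hcvg₀⟩ := Finset.mem_image.1 hv₀G
  subst hcvg₀
  have hg₀min := hGfin.mem_toFinset.1 hg₀mem
  have hg₀R : g₀ ∈ Rn := hg₀min.1.1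
  have hlampos : 0 < lam (cv g₀) :=
    (hlam _ hv₀G).lt_of_ne (fun h => hv₀ne (by rw [← h, zero_smul]))
  have hd₁K : lam (cv g₀) • cv g₀ ∈ K :=
    hKsmul (lam (cv g₀)) (hlam _ hv₀G) _ (hRinK g₀ hg₀R)
  have hd₂K : (∑ v ∈ Gr.erase (cv g₀), lam v • v) ∈ K := by
    apply Finset.sum_induction _ (· ∈ K) (fun a b' ha hb => hKadd a ha b' hb)
    · intro x hx t ht; simpa using hx
    · intro v hv
      obtain ⟨g, hgmem, rfl⟩ := Finset.mem_image.1 (Finset.mem_of_mem_erase hv)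
      exact hKsmul (lam (cv g)) (hlam _ (Finset.mem_of_mem_erase hv)) _
        (hRinK g (hGfin.mem_toFinset.1 hgmem).1.1)
  have hsplit : d = lam (cv g₀) • cv g₀ + ∑ v ∈ Gr.erase (cv g₀), lam v • v := by
    rw [hd]
    exact (Finset.add_sum_erase Gr (fun v => lam v • v) hv₀G).symm
  obtain ⟨t, ht0, hteq⟩ := hext (lam (cv g₀) • cv g₀) hd₁K
    (∑ v ∈ Gr.erase (cv g₀), lam v • v) hd₂K hsplit
  have htpos : 0 < t :=
    ht0.lt_of_ne (fun h => hv₀ne (by rw [hteq, ← h, zero_smul]))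
  refine ⟨g₀, lam (cv g₀) / t, div_pos hlampos htpos, ?_, ?_⟩
  · have hdval : d = t⁻¹ • (lam (cv g₀) • cv g₀) := by
      rw [hteq, smul_smul, inv_mul_cancel₀ htpos.ne', one_smul]
    rw [hdval, smul_smul]
    show (t⁻¹ * lam (cv g₀)) • cv g₀ = (lam (cv g₀) / t) • cv g₀
    rw [div_eq_mul_inv, mul_comm]
  · exact hg₀R
end

section
/- Let Y ⊆ Z^d_+ be a set of nonnegative integer vectors closed under addition of vectors from a monoid M ⊆ Z^d_+ (specifically, Y = {y ∈ Z^d_+ : Ay ∈ b + Z^n} for a real matrix A and b ∈ R^n). Then there exist finite sets E, R ⊆ Z^d_+ such that Y = E + integ.cone(R), where integ.cone(R) is the set of nonnegative integer combinations of elements of R. -/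
namespace Stmt12Aux

variable {n d : ℕ} (A : Matrix (Fin n) (Fin d) ℝ) (b : Fin n → ℝ)

/-- real coercion of a nonnegative integer vector -/
def toR (y : Fin d → ℕ) : Fin d → ℝ := fun j => (y j : ℝ)

/-- the feasible set -/
def YS : Set (Fin d → ℕ) :=
  {y | ∃ z : Fin n → ℤ, A.mulVec (toR y) = b + fun i => (z i : ℝ)}

/-- the recession monoid -/
def MS : Set (Fin d → ℕ) :=
  {m | ∃ z : Fin n → ℤ, A.mulVec (toR m) = fun i => (z i : ℝ)}

lemma toR_add (x y : Fin d → ℕ) : toR (x + y) = toR x + toR y := by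
  funext j; simp [toR]

lemma toR_sub {x y : Fin d → ℕ} (h : x ≤ y) : toR (y - x) = toR y - toR x := by
  funext j
  simp only [toR, Pi.sub_apply]
  rw [Nat.cast_sub (h j)]

lemma add_mem_Y {y m : Fin d → ℕ} (hy : y ∈ YS A b) (hm : m ∈ MS A) :
    y + m ∈ YS A b := by
  obtain ⟨zy, hzy⟩ := hy
  obtain ⟨zm, hzm⟩ := hm
  refine ⟨zy + zm, ?_⟩
  rw [toR_add, Matrix.mulVec_add, hzy, hzm]
  funext i
  simp only [Pi.add_apply]
  push_cast
  ring

lemma sub_mem_M {y y' : Fin d → ℕ} (hy : y ∈ YS A b) (hy' : y' ∈ YS A b)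
    (h : y ≤ y') : y' - y ∈ MS A := by
  obtain ⟨zy, hzy⟩ := hy
  obtain ⟨zy', hzy'⟩ := hy'
  refine ⟨zy' - zy, ?_⟩
  rw [toR_sub h, Matrix.mulVec_sub, hzy, hzy']
  funext i
  simp only [Pi.sub_apply, Pi.add_apply]
  push_cast
  ring

lemma sub_mem_M' {m m' : Fin d → ℕ} (hm : m ∈ MS A) (hm' : m' ∈ MS A)
    (h : m ≤ m') : m' - m ∈ MS A := by
  obtain ⟨zm, hzm⟩ := hm
  obtain ⟨zm', hzm'⟩ := hm'
  refine ⟨zm' - zm, ?_⟩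
  rw [toR_sub h, Matrix.mulVec_sub, hzm, hzm']
  funext i
  simp only [Pi.sub_apply]
  push_cast
  ring

lemma zero_mem_M : (0 : Fin d → ℕ) ∈ MS A := by
  refine ⟨0, ?_⟩
  have h0 : toR (0 : Fin d → ℕ) = 0 := by funext j; simp [toR]
  rw [h0, Matrix.mulVec_zero]
  funext i
  simp

lemma add_mem_M {x y : Fin d → ℕ} (hx : x ∈ MS A) (hy : y ∈ MS A) :
    x + y ∈ MS A := by
  obtain ⟨zx, hzx⟩ := hx
  obtain ⟨zy, hzy⟩ := hy
  refine ⟨zx + zy, ?_⟩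
  rw [toR_add, Matrix.mulVec_add, hzx, hzy]
  funext i
  simp only [Pi.add_apply]
  push_cast
  ring

lemma sum_mem_M (R : Finset (Fin d → ℕ)) (hRM : ∀ r ∈ R, r ∈ MS A)
    (c : (Fin d → ℕ) → ℕ) : (∑ r ∈ R, c r • r) ∈ MS A := by
  have smul_mem : ∀ (k : ℕ) (x : Fin d → ℕ), x ∈ MS A → k • x ∈ MS A := by
    intro k x hx
    induction k with
    | zero => simpa using zero_mem_M A
    | succ k ih => rw [succ_nsmul]; exact add_mem_M A ih hx
  exact Finset.sum_induction _ (· ∈ MS A) (fun _ _ => add_mem_M A) (zero_mem_M A)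
    (fun r hr => smul_mem _ _ (hRM r hr))

lemma sum_lt {x y : Fin d → ℕ} (hle : x ≤ y) (hne : x ≠ y) :
    ∑ j, x j < ∑ j, y j := by
  obtain ⟨j, hj⟩ := Function.ne_iff.mp hne
  exact Finset.sum_lt_sum (fun i _ => hle i)
    ⟨j, Finset.mem_univ j, lt_of_le_of_ne (hle j) hj⟩

/-- every element has a minimal element of the set below it -/
lemma exists_minimal (S : Set (Fin d → ℕ)) (y : Fin d → ℕ) (hy : y ∈ S) :
    ∃ e ∈ S, e ≤ y ∧ ∀ x ∈ S, x ≤ e → x = e := by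
  generalize hN : ∑ j, y j = N
  induction N using Nat.strong_induction_on generalizing y with
  | _ N ih =>
    by_cases h : ∀ x ∈ S, x ≤ y → x = y
    · exact ⟨y, hy, le_rfl, h⟩
    · push_neg at h
      obtain ⟨x, hxS, hxy, hne⟩ := h
      obtain ⟨e, heS, hex, hemin⟩ := ih (∑ j, x j) (hN ▸ sum_lt hxy hne) x hxS rfl
      exact ⟨e, heS, hex.trans hxy, hemin⟩

/-- generation: every element of M is a nonnegative combination of the
minimal nonzero elements -/
lemma mem_M_rep (R : Finset (Fin d → ℕ))
    (hR : ∀ x, x ∈ R ↔ x ∈ MS A ∧ x ≠ 0 ∧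
      ∀ x' ∈ MS A, x' ≠ 0 → x' ≤ x → x' = x)
    (m : Fin d → ℕ) (hm : m ∈ MS A) :
    ∃ c : (Fin d → ℕ) → ℕ, m = ∑ r ∈ R, c r • r := by
  classical
  generalize hN : ∑ j, m j = N
  induction N using Nat.strong_induction_on generalizing m with
  | _ N ih =>
    by_cases h0 : m = 0
    · exact ⟨0, by simp [h0]⟩
    · obtain ⟨e, heS, hem, hemin⟩ :=
        exists_minimal {x | x ∈ MS A ∧ x ≠ 0} m ⟨hm, h0⟩
      have heR : e ∈ R := (hR e).2
        ⟨heS.1, heS.2, fun x' hx' hne hle => hemin x' ⟨hx', hne⟩ hle⟩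
      have hsub : m - e ∈ MS A := sub_mem_M' A heS.1 hm hem
      have hne : m - e ≠ m := by
        intro hEq
        obtain ⟨j, hj⟩ := Function.ne_iff.mp heS.2
        have h1 : (m - e) j = m j := congrFun hEq j
        have h2 : m j - e j = m j := h1
        have h3 : e j ≤ m j := hem j
        have h4 : e j ≠ 0 := hj
        omega
      have hlt : ∑ j, (m - e) j < ∑ j, m j := sum_lt (fun j => by
        have := hem j; simp only [Pi.sub_apply]; omega) hne
      obtain ⟨c', hc'⟩ := ih _ (hN ▸ hlt) (m - e) hsub rfl
      refine ⟨fun r => c' r + if r = e then 1 else 0, ?_⟩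
      have hsplit : ∑ r ∈ R, (c' r + if r = e then 1 else 0) • r
          = (∑ r ∈ R, c' r • r) + ∑ r ∈ R, (if r = e then 1 else 0) • r := by
        rw [← Finset.sum_add_distrib]
        exact Finset.sum_congr rfl fun r _ => by rw [add_smul]
      have hind : ∑ r ∈ R, (if r = e then 1 else 0) • r = e := by
        rw [Finset.sum_congr rfl (fun r _ => by
          rw [ite_smul, one_smul, zero_smul] : ∀ r ∈ R, _ = if r = e then r else 0)]
        rw [Finset.sum_ite_eq' R e (fun r => r), if_pos heR]
      rw [hsplit, hind, ← hc']
      exact (tsub_add_cancel_of_le hem).symm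

end Stmt12Aux

/-- Let `Y = {y ∈ ℤ^d₊ : Ay ∈ b + ℤ^n}` for a real matrix `A` and `b ∈ ℝ^n`.
Then there exist finite sets `E, R ⊆ ℤ^d₊` with `Y = E + integ.cone(R)`. -/
theorem stmt12 (n d : ℕ) (A : Matrix (Fin n) (Fin d) ℝ) (b : Fin n → ℝ) :
    ∃ E R : Finset (Fin d → ℕ),
      {y : Fin d → ℕ | ∃ z : Fin n → ℤ,
          A.mulVec (fun j => (y j : ℝ)) = b + fun i => (z i : ℝ)} =
      {y : Fin d → ℕ | ∃ e ∈ E, ∃ c : (Fin d → ℕ) → ℕ,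
          y = e + ∑ r ∈ R, c r • r} := by
  classical
  open Stmt12Aux in
  have hpwo : ∀ s : Set (Fin d → ℕ), s.PartiallyWellOrderedOn (· ≤ ·) :=
    haveI h : ∀ _ : Fin d, IsWellOrder ℕ (· < ·) := fun _ => inferInstance
    fun s => Set.isPWO_of_wellQuasiOrderedLE s
  -- minimal elements of Y
  have hEfin : Set.Finite {y | y ∈ YS A b ∧ ∀ x ∈ YS A b, x ≤ y → x = y} := by
    apply IsAntichain.finite_of_partiallyWellOrderedOn (r := (· ≤ ·))
    · intro a ha a' ha' hne hle
      exact hne (ha'.2 a ha.1 hle)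
    · exact hpwo _
  have hRfin : Set.Finite {m | (m ∈ MS A ∧ m ≠ 0) ∧
      ∀ x, (x ∈ MS A ∧ x ≠ 0) → x ≤ m → x = m} := by
    apply IsAntichain.finite_of_partiallyWellOrderedOn (r := (· ≤ ·))
    · intro a ha a' ha' hne hle
      exact hne (ha'.2 a ha.1 hle)
    · exact hpwo _
  refine ⟨hEfin.toFinset, hRfin.toFinset, ?_⟩
  have hR : ∀ x, x ∈ hRfin.toFinset ↔ x ∈ MS A ∧ x ≠ 0 ∧
      ∀ x' ∈ MS A, x' ≠ 0 → x' ≤ x → x' = x := by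
    intro x
    rw [Set.Finite.mem_toFinset]
    constructor
    · rintro ⟨⟨h1, h2⟩, h3⟩
      exact ⟨h1, h2, fun x' hx' hne hle => h3 x' ⟨hx', hne⟩ hle⟩
    · rintro ⟨h1, h2, h3⟩
      exact ⟨⟨h1, h2⟩, fun x' hx' hle => h3 x' hx'.1 hx'.2 hle⟩
  ext y
  constructor
  · intro hy
    have hyY : y ∈ YS A b := hy
    obtain ⟨e, heS, hey, hemin⟩ := exists_minimal (YS A b) y hyY
    have heE : e ∈ hEfin.toFinset := by
      rw [Set.Finite.mem_toFinset]; exact ⟨heS, hemin⟩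
    have hsub : y - e ∈ MS A := sub_mem_M A b heS hyY hey
    obtain ⟨c, hc⟩ := mem_M_rep A hRfin.toFinset hR (y - e) hsub
    exact ⟨e, heE, c, by rw [← hc]; exact (add_tsub_cancel_of_le hey).symm⟩
  · rintro ⟨e, heE, c, rfl⟩
    have heY : e ∈ YS A b := (hEfin.mem_toFinset.mp heE).1
    have hsum : (∑ r ∈ hRfin.toFinset, c r • r) ∈ MS A :=
      sum_mem_M A hRfin.toFinset (fun r hr => ((hR r).mp hr).1) c
    exact add_mem_Y A b heY hsum
end

section
/- Fix a finite set P ⊆ R^n with P ⊆ Q^n and b ∈ Q^n, and let C^P := conv{y ∈ Z^P_+ : Σ_{p∈P} p·y(p) ∈ b + Z^n}. If C^P is nonempty, then the recession cone of C^P equals the full nonnegative orthant R^P_+. -/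
lemma aux14 (q : ℚ) (k : ℕ) (h : q.den ∣ k) : ∃ z : ℤ, (k : ℚ) * q = z := by
  obtain ⟨c, rfl⟩ := h
  refine ⟨c * q.num, ?_⟩
  push_cast
  linear_combination (c : ℚ) * Rat.mul_den_eq_num q

/-- For a finite set `P ⊆ ℚ^n` and `b ∈ ℚ^n`, if the corner polyhedron
`C^P = conv{y ∈ ℤ^P₊ : ∑ p, p·y(p) ∈ b + ℤ^n}` is nonempty, then its recession
cone is the full nonnegative orthant `ℝ^P₊`. -/
theorem stmt14 (n m : ℕ) (p : Fin m → Fin n → ℚ) (b : Fin n → ℚ)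
    (C : Set (Fin m → ℝ))
    (hC : C = convexHull ℝ {y : Fin m → ℝ | ∃ yi : Fin m → ℕ,
        y = (fun j => (yi j : ℝ)) ∧
        ∃ z : Fin n → ℤ, (∑ j, (yi j : ℝ) • fun i => ((p j i : ℝ))) =
          (fun i => (b i : ℝ)) + fun i => (z i : ℝ)})
    (hne : C.Nonempty) :
    {v : Fin m → ℝ | ∀ x ∈ C, ∀ t : ℝ, 0 ≤ t → x + t • v ∈ C} =
      {v : Fin m → ℝ | ∀ j, 0 ≤ v j} := by
  set S : Set (Fin m → ℝ) := {y : Fin m → ℝ | ∃ yi : Fin m → ℕ,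
        y = (fun j => (yi j : ℝ)) ∧
        ∃ z : Fin n → ℤ, (∑ j, (yi j : ℝ) • fun i => ((p j i : ℝ))) =
          (fun i => (b i : ℝ)) + fun i => (z i : ℝ)} with hS
  subst hC
  -- C is contained in the nonnegative orthant
  have horth : convexHull ℝ S ⊆ {y : Fin m → ℝ | ∀ j, 0 ≤ y j} := by
    apply convexHull_min
    · rintro y ⟨yi, rfl, -⟩ j
      exact Nat.cast_nonneg _
    · intro x hx y hy a c ha hc hac j
      have := hx j
      have := hy j
      simp only [Pi.add_apply, Pi.smul_apply, smul_eq_mul]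
      nlinarith
  -- the key step: adding a single nonnegative coordinate stays in C
  have hstep : ∀ (j : Fin m) (c : ℝ), 0 ≤ c →
      ∀ x ∈ convexHull ℝ S, x + Pi.single j c ∈ convexHull ℝ S := by
    intro j c hc
    obtain ⟨k, hkpos, w, hw⟩ : ∃ k : ℕ, 0 < k ∧ ∃ w : Fin n → ℤ,
        ∀ i, ((k : ℝ)) * (p j i : ℝ) = (w i : ℝ) := by
      refine ⟨∏ i, (p j i).den, Finset.prod_pos fun i _ => (p j i).pos, ?_⟩
      have h1 : ∀ i : Fin n, ∃ z : ℤ, ((∏ i, (p j i).den : ℕ) : ℚ) * p j i = z :=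
        fun i => aux14 _ _ (Finset.dvd_prod_of_mem _ (Finset.mem_univ i))
      choose w hw using h1
      exact ⟨w, fun i => by exact_mod_cast congrArg (fun q : ℚ => (q : ℝ)) (hw i)⟩
    -- S is stable under adding N*k at coordinate j
    have hSstep : ∀ x ∈ S, ∀ N : ℕ,
        x + (Pi.single j ((N * k : ℕ) : ℝ) : Fin m → ℝ) ∈ S := by
      rintro x ⟨yi, rfl, z, hz⟩ N
      set g : Fin m → ℕ := Pi.single j (N * k) with hg
      refine ⟨yi + g, ?_, fun i => z i + N * w i, ?_⟩
      · funext j'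
        by_cases h : j' = j
        · subst h; simp [hg]
        · simp [hg, Pi.single_apply, h]
      · funext i
        have h1 := congrFun hz i
        simp only [Finset.sum_apply, Pi.smul_apply, smul_eq_mul, Pi.add_apply] at h1 ⊢
        have h2 : ∀ j' : Fin m, (((yi j' + g j' : ℕ) : ℝ)) * p j' i
            = (yi j' : ℝ) * p j' i + (g j' : ℝ) * (p j' i : ℝ) := by
          intro j'; push_cast; ring
        rw [Finset.sum_congr rfl fun j' _ => h2 j', Finset.sum_add_distrib]
        have h3 : ∑ j' : Fin m, ((g j' : ℝ)) * (p j' i : ℝ)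
            = ((N * k : ℕ) : ℝ) * p j i := by
          rw [Finset.sum_eq_single j]
          · simp [hg]
          · intro j' _ hj'; simp [hg, Pi.single_apply, hj']
          · simp
        rw [h3, h1]
        have h4 : ((N * k : ℕ) : ℝ) * p j i = (N : ℝ) * (w i : ℝ) := by
          push_cast
          rw [mul_assoc, hw i]
        rw [h4]
        push_cast
        ring
    -- points of S move into C
    have hS3 : S ⊆ {x : Fin m → ℝ | x + Pi.single j c ∈ convexHull ℝ S} := by
      intro x hx
      set N : ℕ := ⌈c⌉₊ + 1 with hN
      have hM0 : (0 : ℝ) < ((N * k : ℕ) : ℝ) := by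
        have : 0 < N * k := Nat.mul_pos (Nat.succ_pos _) hkpos
        exact_mod_cast this
      have hcM : c ≤ ((N * k : ℕ) : ℝ) := by
        calc c ≤ (⌈c⌉₊ : ℝ) := Nat.le_ceil c
        _ ≤ ((N * k : ℕ) : ℝ) := by
          have : ⌈c⌉₊ ≤ N * k := le_trans (Nat.le_succ _) (Nat.le_mul_of_pos_right _ hkpos)
          exact_mod_cast this
      have hxC : x ∈ convexHull ℝ S := subset_convexHull ℝ S hx
      have hyC : x + (Pi.single j ((N * k : ℕ) : ℝ) : Fin m → ℝ) ∈ convexHull ℝ S :=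
        subset_convexHull ℝ S (hSstep x hx N)
      have ht : c / ((N * k : ℕ) : ℝ) ∈ Set.Icc (0:ℝ) 1 :=
        ⟨div_nonneg hc hM0.le, (div_le_one hM0).2 hcM⟩
      have hmem := (convex_convexHull ℝ S).add_smul_mem hxC hyC ht
      have heq : (c / ((N * k : ℕ) : ℝ)) • (Pi.single j ((N * k : ℕ) : ℝ) : Fin m → ℝ)
          = (Pi.single j c : Fin m → ℝ) := by
        rw [← Pi.single_smul]
        simp only [smul_eq_mul]
        field_simp
      rwa [heq] at hmem
    -- extend to all of C by convexity of the preimage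
    intro x hx
    have hconvset : Convex ℝ {x : Fin m → ℝ | x + Pi.single j c ∈ convexHull ℝ S} := by
      have hid : {x : Fin m → ℝ | x + Pi.single j c ∈ convexHull ℝ S}
          = (fun y => (Pi.single j c : Fin m → ℝ) + y) ⁻¹' (convexHull ℝ S) := by
        ext y; simp [add_comm]
      rw [hid]
      exact (convex_convexHull ℝ S).translate_preimage_right _
    exact convexHull_min hS3 hconvset hx
  ext v
  simp only [Set.mem_setOf_eq]
  constructor
  · intro hv j
    obtain ⟨x, hx⟩ := hne
    by_contra hvj
    push_neg at hvj
    have hvne : v j ≠ 0 := ne_of_lt hvj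
    have hxj : 0 ≤ x j := horth hx j
    set t : ℝ := (x j + 1) / (-(v j)) with htdef
    have ht : 0 ≤ t := div_nonneg (by linarith) (by linarith)
    have hmem := hv x hx t ht
    have hcoord := horth hmem j
    simp only [Pi.add_apply, Pi.smul_apply, smul_eq_mul, Set.mem_setOf_eq] at hcoord
    have htv : t * v j = -(x j + 1) := by
      rw [htdef]
      field_simp
    linarith [htv ▸ hcoord]
  · intro hv x hx t ht
    have key : ∀ (F : Finset (Fin m)),
        x + ∑ j ∈ F, (Pi.single j (t * v j) : Fin m → ℝ) ∈ convexHull ℝ S := by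
      intro F
      induction F using Finset.induction_on with
      | empty => simpa using hx
      | @insert j F' hj ih =>
        rw [Finset.sum_insert hj]
        have hre : x + ((Pi.single j (t * v j) : Fin m → ℝ)
              + ∑ j' ∈ F', (Pi.single j' (t * v j') : Fin m → ℝ))
            = (x + ∑ j' ∈ F', (Pi.single j' (t * v j') : Fin m → ℝ))
              + Pi.single j (t * v j) := by abel
        rw [hre]
        exact hstep j (t * v j) (mul_nonneg ht (hv j)) _ ih
    have hkey := key Finset.univ
    have heq : ∑ j : Fin m, (Pi.single j (t * v j) : Fin m → ℝ) = t • v := by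
      rw [← Finset.univ_sum_single (t • v)]
      rfl
    rwa [heq] at hkey
end

section
/- Let θ : R^n → R be an additive function (θ(u+v) = θ(u)+θ(v)) vanishing on Q^n, let P ⊆ R^n be finite, and let p_1,…,p_k ∈ P be a maximal subset such that {p_1,…,p_k} ∪ {e_1,…,e_n} is linearly independent over Q. Then there exist real numbers λ_1,…,λ_k such that θ(p) = Σ_{i=1}^k λ_i θ_i(p) for every p ∈ P, where θ_i are additive functions vanishing on Q^n with θ_i(p_j) = δ_{ij}, and moreover θ_i(p) ∈ Q for all p ∈ P. -/
/-- Let `θ : ℝ^n → ℝ` be additive and vanishing on `ℚ^n`, let `P ⊆ ℝ^n` be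
finite and `p₁, …, p_k ∈ P` a maximal subset such that `{p₁,…,p_k} ∪ {e₁,…,e_n}`
is linearly independent over `ℚ`. Then there exist additive functions
`θ₁, …, θ_k` vanishing on `ℚ^n` with `θᵢ(p_j) = δᵢⱼ`, taking rational values on
`P`, and reals `λ₁,…,λ_k` such that `θ(p) = ∑ᵢ λᵢ θᵢ(p)` for all `p ∈ P`. -/
theorem stmt16 (n k : ℕ) (θ : (Fin n → ℝ) → ℝ)
    (hadd : ∀ u v, θ (u + v) = θ u + θ v)
    (hrat : ∀ q : Fin n → ℚ, θ (fun i => (q i : ℝ)) = 0)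
    (P : Finset (Fin n → ℝ)) (p : Fin k → Fin n → ℝ) (hpP : ∀ i, p i ∈ P)
    (hindep : ∀ (q : Fin k → ℚ) (c : Fin n → ℚ),
      ((∑ i, (q i : ℝ) • p i) + fun j => (c j : ℝ)) = 0 → q = 0 ∧ c = 0)
    (hmax : ∀ x ∈ P, ∃ (q : Fin k → ℚ) (c : Fin n → ℚ),
      x = (fun j => (c j : ℝ)) + ∑ i, (q i : ℝ) • p i) :
    ∃ (Θ : Fin k → ((Fin n → ℝ) → ℝ)) (l : Fin k → ℝ),
      (∀ i, ∀ u v, Θ i (u + v) = Θ i u + Θ i v) ∧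
      (∀ i, ∀ q : Fin n → ℚ, Θ i (fun j => (q j : ℝ)) = 0) ∧
      (∀ i j, Θ i (p j) = if i = j then 1 else 0) ∧
      (∀ i, ∀ x ∈ P, ∃ q : ℚ, Θ i x = (q : ℝ)) ∧
      (∀ x ∈ P, θ x = ∑ i, l i * Θ i x) := by
  classical
  -- standard basis vectors
  set e : Fin n → (Fin n → ℝ) := fun j => Pi.single j (1:ℝ) with he
  set v : Fin k ⊕ Fin n → (Fin n → ℝ) := Sum.elim p e with hv
  have hcast : ∀ (q : ℚ) (x : Fin n → ℝ), q • x = (q : ℝ) • x := fun q x =>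
    (Rat.cast_smul_eq_qsmul ℝ q x).symm
  have hesum : ∀ c : Fin n → ℚ, (∑ j, (c j : ℝ) • e j) = fun j => (c j : ℝ) := by
    intro c
    funext i
    simp [he, Finset.sum_apply, Pi.single_apply, mul_ite]
  -- linear independence over ℚ
  have hli : LinearIndependent ℚ v := by
    rw [Fintype.linearIndependent_iff]
    intro g hg
    rw [Fintype.sum_sum_type] at hg
    have hg' : ((∑ i, ((g (.inl i) : ℝ)) • p i) + fun j => ((g (.inr j) : ℝ))) = 0 := by
      rw [← hesum fun j => g (.inr j)]
      simpa [hv, hcast] using hg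
    obtain ⟨h1, h2⟩ := hindep _ _ hg'
    rintro (i | j)
    · exact congrFun h1 i
    · exact congrFun h2 j
  have hli' := (linearIndepOn_id_range_iff hli.injective).mpr hli
  set B := Module.Basis.extend hli' with hB
  have hmem : ∀ a : Fin k ⊕ Fin n, v a ∈ hli'.extend (Set.subset_univ _) := fun a =>
    hli'.subset_extend _ ⟨a, rfl⟩
  set idx : Fin k ⊕ Fin n → (hli'.extend (Set.subset_univ _) : Set (Fin n → ℝ)) :=
    fun a => ⟨v a, hmem a⟩ with hidx
  have hBidx : ∀ a, B (idx a) = v a := fun a => Module.Basis.extend_apply_self hli' _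
  have hidx_inj : Function.Injective idx := by
    intro a b hab
    exact hli.injective (by simpa [hidx] using congrArg Subtype.val hab)
  -- the functionals
  set Θ : Fin k → ((Fin n → ℝ) → ℝ) := fun i x => ((B.repr x) (idx (.inl i)) : ℝ) with hΘ
  -- θ as a ℚ-linear map
  set L : (Fin n → ℝ) →ₗ[ℚ] ℝ := (AddMonoidHom.mk' θ hadd).toRatLinearMap with hL
  have hLθ : ∀ x, L x = θ x := fun x => rfl
  -- key computation: repr of a decomposed element
  have hrepr : ∀ (q : Fin k → ℚ) (c : Fin n → ℚ) (i : Fin k),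
      (B.repr ((fun j => (c j : ℝ)) + ∑ i, (q i : ℝ) • p i)) (idx (.inl i)) = q i := by
    intro q c i
    have hx : ((fun j => (c j : ℝ)) + ∑ i, (q i : ℝ) • p i)
        = (∑ j, c j • B (idx (.inr j))) + ∑ i', q i' • B (idx (.inl i')) := by
      rw [← hesum c]
      congr 1
      · exact Finset.sum_congr rfl fun j _ => by rw [hBidx, hcast, hv]; rfl
      · exact Finset.sum_congr rfl fun i' _ => by rw [hBidx, hcast, hv]; rfl
    rw [hx]
    simp only [map_add, map_sum, map_smul, Module.Basis.repr_self, Finsupp.coe_add,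
      Finsupp.coe_smul, Finset.sum_apply', Pi.add_apply, Finsupp.smul_apply,
      Finsupp.single_apply, hidx_inj.eq_iff]
    simp
  refine ⟨Θ, fun i => θ (p i), ?_, ?_, ?_, ?_, ?_⟩
  · intro i u w
    simp [hΘ, map_add]
  · intro i q
    have h0 : ((fun j => (q j : ℝ)) + ∑ i', ((0 : Fin k → ℚ) i' : ℝ) • p i') = fun j => (q j : ℝ) := by
      funext j; simp
    have hr := hrepr 0 q i
    rw [h0] at hr
    rw [hΘ]
    simp [hr]
  · intro i j
    have hs : (∑ i', ((fun i' => if i' = j then (1:ℚ) else 0) i' : ℝ) • p i') = p j := by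
      rw [Finset.sum_eq_single j]
      · simp
      · intro b _ hb; simp [hb]
      · simp
    have : p j = (fun j' => ((0 : ℚ) : ℝ)) + ∑ i', ((fun i' => if i' = j then (1:ℚ) else 0) i' : ℝ) • p i' := by
      rw [hs]; funext j'; simp
    rw [hΘ]
    simp only [this]
    rw [hrepr]
    split <;> simp
  · intro i x _
    exact ⟨(B.repr x) (idx (.inl i)), rfl⟩
  · intro x hx
    obtain ⟨q, c, hqc⟩ := hmax x hx
    have hΘx : ∀ i, Θ i x = (q i : ℝ) := by
      intro i
      rw [hΘ]
      simp only [hqc]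
      rw [hrepr]
    have hθx : θ x = ∑ i, (q i : ℝ) * θ (p i) := by
      rw [← hLθ, hqc, map_add, map_sum]
      have hc : L (fun j => (c j : ℝ)) = 0 := hrat c
      rw [hc, zero_add]
      refine Finset.sum_congr rfl fun i _ => ?_
      rw [← hcast, map_smul, hLθ]
      simp [Rat.smul_def]
    rw [hθx]
    exact Finset.sum_congr rfl fun i _ => by rw [hΘx i]; ring
end
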